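/- arXiv:2402.09951 — 3 statements merged into one kernel-verified Lean document; each statement's English description precedes it below -/
import Mathlib

section
/- Let k ≥ 3, let A be a first-order expansion of the canonical k-ary structure of a permutation group G. Let φ1 be a (C,u1,D,v1)-implication and φ2 a (D,u2,E,v2)-implication in A with proj_{v1}(φ1^A) = proj_{u2}(φ2^A). Then φ := φ1∘φ2 is a (C,u1,E,v2)-pre-implication in A. Moreover, for all orbits O1 ⊆ proj_{u1}(φ1^A) and O3 ⊆ proj_{v2}(φ2^A) under G, φ^A contains an O1O3-mapping if, and only if, there exists an orbit O2 under G such that φ1^A contains an O1O2-mapping and φ2^A contains an O2O3-mapping. -/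
open Function Set

namespace CSPPaper

/-- A relational signature: a type of relation symbols together with arities. -/
structure Sig where
  ι : Type
  arity : ι → ℕ

/-- A relational structure with signature `σ` on domain `A`. -/
structure StructOn (σ : Sig) (A : Type) where
  rel : ∀ i : σ.ι, Set (Fin (σ.arity i) → A)

variable {A : Type} {σ σ' : Sig}

/-! ### Homomorphisms and embeddings between relational structures -/

def IsHom {B : Type} (X : StructOn σ A) (Y : StructOn σ B) (h : A → B) : Prop :=
  ∀ i, ∀ t ∈ X.rel i, (h ∘ t) ∈ Y.rel i

def IsEmbeddingHom {B : Type} (X : StructOn σ A) (Y : StructOn σ B) (h : A → B) : Prop :=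
  Function.Injective h ∧ ∀ i, ∀ t : Fin (σ.arity i) → A, t ∈ X.rel i ↔ (h ∘ t) ∈ Y.rel i

def Embeds {B : Type} (X : StructOn σ A) (Y : StructOn σ B) : Prop :=
  ∃ h, IsEmbeddingHom X Y h

def Isomorphic {B : Type} (X : StructOn σ A) (Y : StructOn σ B) : Prop :=
  ∃ h, Function.Bijective h ∧ IsEmbeddingHom X Y h

/-- A finite `σ`-structure, with domain `Fin m` for some `m`. -/
def FinStructOn (σ : Sig) : Type := Σ m : ℕ, StructOn σ (Fin m)

/-- `Y` is a homomorphic image of `X`. -/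
def IsHomImage (X Y : FinStructOn σ) : Prop :=
  ∃ h : Fin X.1 → Fin Y.1, Function.Surjective h ∧
    ∀ i, Y.2.rel i = (fun t => h ∘ t) '' X.2.rel i

/-- The substructure of `X` induced on a subset `S` of its domain. -/
def inducedSub {B : Type} (X : StructOn σ B) (S : Set B) : StructOn σ ↥S :=
  ⟨fun i => {t | (fun j => (t j : B)) ∈ X.rel i}⟩

/-! ### Finite boundedness and finite duality -/

/-- `F` is a finite list of bounds witnessing finite boundedness of `S`. -/
def IsBoundWitness (S : StructOn σ A) (F : List (FinStructOn σ)) : Prop :=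
  ∀ C : FinStructOn σ, (∀ X ∈ F, ¬ Embeds X.2 C.2) → Embeds C.2 S

def FinitelyBounded (S : StructOn σ A) : Prop := ∃ F, IsBoundWitness S F

/-- `b = b_S`: the least possible size of the biggest structure in a witnessing family. -/
def IsBoundSize (S : StructOn σ A) (b : ℕ) : Prop :=
  IsLeast {b' : ℕ | ∃ F, IsBoundWitness S F ∧ ∀ X ∈ F, X.1 ≤ b'} b

/-- `S` has finite duality: it is finitely bounded with a witnessing family closed under
homomorphic images. -/
def FiniteDuality (S : StructOn σ A) : Prop :=
  ∃ F, IsBoundWitness S F ∧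
    ∀ X ∈ F, ∀ Y : FinStructOn σ, IsHomImage X Y → ∃ X' ∈ F, Isomorphic X'.2 Y.2

/-! ### Permutation groups -/

def orbitOf (G : Subgroup (Equiv.Perm A)) {n : ℕ} (t : Fin n → A) : Set (Fin n → A) :=
  {s | ∃ g ∈ G, s = ⇑g ∘ t}

def IsGOrbit (G : Subgroup (Equiv.Perm A)) {n : ℕ} (O : Set (Fin n → A)) : Prop :=
  ∃ t, O = orbitOf G t

def Oligomorphic (G : Subgroup (Equiv.Perm A)) : Prop :=
  ∀ n : ℕ, {O : Set (Fin n → A) | IsGOrbit G O}.Finite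

/-- `G` is `m`-transitive: one orbit on injective `m`-tuples. -/
def MTransitive (G : Subgroup (Equiv.Perm A)) (m : ℕ) : Prop :=
  ∀ s t : Fin m → A, Function.Injective s → Function.Injective t →
    ∃ g ∈ G, ⇑g ∘ s = t

/-- `G` is `k`-homogeneous: for every `ℓ ≥ k`, the orbit of every `ℓ`-tuple is determined
by the orbits of its `k`-subtuples. -/
def KHomogeneous (G : Subgroup (Equiv.Perm A)) (k : ℕ) : Prop :=
  ∀ ℓ : ℕ, k ≤ ℓ → ∀ s t : Fin ℓ → A,
    (∀ p : Fin k → Fin ℓ, orbitOf G (s ∘ p) = orbitOf G (t ∘ p)) →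
    orbitOf G s = orbitOf G t

/-- `G` has no `k`-algebraicity: the only fixed points of any pointwise stabilizer by
`k-1` elements are these elements themselves. -/
def NoKAlgebraicity (G : Subgroup (Equiv.Perm A)) (k : ℕ) : Prop :=
  ∀ (a : Fin (k - 1) → A) (b : A),
    (∀ g ∈ G, (∀ i, g (a i) = a i) → g b = b) → ∃ i, b = a i

def Neoliberal (G : Subgroup (Equiv.Perm A)) (k : ℕ) : Prop :=
  Oligomorphic G ∧ MTransitive G (k - 1) ∧ KHomogeneous G k ∧ NoKAlgebraicity G k

/-- The signature of the canonical `k`-ary structure of `G`: one `k`-ary symbol for each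
orbit of `k`-tuples. -/
def canonSig (G : Subgroup (Equiv.Perm A)) (k : ℕ) : Sig :=
  ⟨{O : Set (Fin k → A) // IsGOrbit G O}, fun _ => k⟩

/-- The canonical `k`-ary structure of `G`. -/
def canonStruct (G : Subgroup (Equiv.Perm A)) (k : ℕ) : StructOn (canonSig G k) A :=
  ⟨fun O => O.1⟩

/-! ### First-order definability (via Mathlib's model theory) -/

def sigLang (σ : Sig) : FirstOrder.Language :=
  { Functions := fun _ => Empty, Relations := fun n => {i : σ.ι // σ.arity i = n} }

def structureOf (S : StructOn σ A) : (sigLang σ).Structure A where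
  funMap := fun f _ => f.elim
  RelMap := fun r t => (fun j => t (Fin.cast r.2 j)) ∈ S.rel r.1

/-- `R` is first-order definable in the structure `S` (without parameters). -/
def foDefinable (S : StructOn σ A) {α : Type} (R : Set (α → A)) : Prop :=
  letI := structureOf S
  Set.Definable (∅ : Set A) (sigLang σ) R

/-- `T` is a first-order expansion of `S`: all relations of `S` are among those of `T`,
and every relation of `T` is first-order definable in `S`. -/
def IsFOExpansion (S : StructOn σ A) (T : StructOn σ' A) : Prop :=
  (∃ (j : σ.ι → σ'.ι) (h : ∀ i, σ'.arity (j i) = σ.arity i),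
    ∀ i, T.rel (j i) = {t | (t ∘ Fin.cast (h i).symm) ∈ S.rel i}) ∧
  ∀ i' : σ'.ι, foDefinable S (T.rel i')

/-! ### Primitive positive definability -/

/-- `R ⊆ A^α` is definable by a primitive positive formula over the signature of `S`:
there are existentially quantified extra variables `Fin m`, a finite list of atomic
constraints (relation symbols applied to variables) and a finite list of equality atoms,
whose satisfying assignments project to `R`. -/
def ppDefinable (S : StructOn σ A) {α : Type} (R : Set (α → A)) : Prop :=
  ∃ (m : ℕ) (atoms : List ((i : σ.ι) × (Fin (σ.arity i) → α ⊕ Fin m)))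
    (eqs : List ((α ⊕ Fin m) × (α ⊕ Fin m))),
    R = {t | ∃ e : Fin m → A,
      (∀ c ∈ atoms, (Sum.elim t e ∘ c.2) ∈ S.rel c.1) ∧
      ∀ p ∈ eqs, Sum.elim t e p.1 = Sum.elim t e p.2}

/-! ### Polymorphisms and automorphisms -/

def Preserves {n m : ℕ} (f : (Fin n → A) → A) (R : Set (Fin m → A)) : Prop :=
  ∀ ts : Fin n → Fin m → A, (∀ j, ts j ∈ R) → (fun i => f fun j => ts j i) ∈ R

def IsPolymorphism (S : StructOn σ A) {n : ℕ} (f : (Fin n → A) → A) : Prop :=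
  ∀ i, Preserves f (S.rel i)

def HasBinaryInjection (S : StructOn σ A) : Prop :=
  ∃ f : (Fin 2 → A) → A, IsPolymorphism S f ∧ Function.Injective f

def IsAuto (S : StructOn σ A) (g : A → A) : Prop :=
  Function.Bijective g ∧ ∀ i, ∀ t : Fin (σ.arity i) → A, t ∈ S.rel i ↔ (g ∘ t) ∈ S.rel i

def autOrbit (S : StructOn σ A) {n : ℕ} (t : Fin n → A) : Set (Fin n → A) :=
  {s | ∃ g, IsAuto S g ∧ s = g ∘ t}

def IsAutOrbit (S : StructOn σ A) {n : ℕ} (O : Set (Fin n → A)) : Prop :=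
  ∃ t, O = autOrbit S t

def OmegaCategorical (S : StructOn σ A) : Prop :=
  ∀ n : ℕ, {O : Set (Fin n → A) | IsAutOrbit S O}.Finite

def Oligopotent (S : StructOn σ A) {n : ℕ} (f : (Fin n → A) → A) : Prop :=
  ∀ B' : Set A, B'.Finite → ∃ α : A → A, IsAuto S α ∧ ∀ b ∈ B', f (fun _ => b) = α b

/-- `f` is a quasi near-unanimity operation. -/
def IsQNU {n : ℕ} (f : (Fin n → A) → A) : Prop :=
  ∀ a b : A, ∀ j : Fin n, f (Function.update (fun _ => b) j a) = f (fun _ => a)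

/-! ### CSP instances, minimality, relational width, strict width -/

structure Constraint (A V : Type) where
  scope : Set V
  val : Set (↥scope → A)

structure Instance (A V : Type) where
  cons : Set (Constraint A V)
  fin : cons.Finite

def Instance.Solution {V : Type} (I : Instance A V) (f : V → A) : Prop :=
  ∀ C ∈ I.cons, (fun x : ↥C.scope => f x.1) ∈ C.val

def Instance.NonTrivial {V : Type} (I : Instance A V) : Prop :=
  ∀ C ∈ I.cons, C.val.Nonempty

/-- Projection of a constraint onto a tuple of variables from its scope. -/
def Constraint.projOn {V : Type} {m : ℕ} (C : Constraint A V) (u : Fin m → V)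
    (h : ∀ j, u j ∈ C.scope) : Set (Fin m → A) :=
  {t | ∃ f ∈ C.val, ∀ j, t j = f ⟨u j, h j⟩}

/-- `(k,ℓ)`-minimality of an instance. -/
def Instance.Minimal {V : Type} (I : Instance A V) (k ℓ : ℕ) : Prop :=
  (∀ m ≤ ℓ, ∀ t : Fin m → V, ∃ C ∈ I.cons, ∀ j, t j ∈ C.scope) ∧
  (∀ m ≤ k, ∀ u : Fin m → V, ∀ C1 ∈ I.cons, ∀ C2 ∈ I.cons,
    ∀ (h1 : ∀ j, u j ∈ C1.scope) (h2 : ∀ j, u j ∈ C2.scope),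
      C1.projOn u h1 = C2.projOn u h2)

/-- `I` is an instance of `CSP(S)`: every constraint is, under some enumeration of its
scope, a relation of `S`. -/
def Instance.OfCSP {V : Type} (S : StructOn σ A) (I : Instance A V) : Prop :=
  ∀ C ∈ I.cons, ∃ (i : σ.ι) (e : Fin (σ.arity i) ≃ ↥C.scope),
    C.val = {f | (fun j => f (e j)) ∈ S.rel i}

/-- `I` is an instance of `CSP_inj(S)`: an instance of `CSP(S)` all of whose constraints
project onto pairs of distinct variables into the injective pairs. -/
def Instance.OfInjCSP {V : Type} (S : StructOn σ A) (I : Instance A V) : Prop :=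
  I.OfCSP S ∧ ∀ C ∈ I.cons, ∀ x y : ↥C.scope, x.1 ≠ y.1 → ∀ f ∈ C.val, f x ≠ f y

def Instance.EquivTo {V : Type} (I J : Instance A V) : Prop :=
  ∀ f : V → A, I.Solution f ↔ J.Solution f

/-- `S` has relational width `(k,ℓ)`. -/
def RelWidth (S : StructOn σ A) (k ℓ : ℕ) : Prop :=
  ∀ (V : Type), Finite V → ∀ I : Instance A V, I.NonTrivial → I.Minimal k ℓ →
    (∃ J : Instance A V, J.OfCSP S ∧ I.EquivTo J) → ∃ f, I.Solution f

/-- `CSP_inj(S)` has relational width `(k,ℓ)`. -/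
def RelWidthInj (S : StructOn σ A) (k ℓ : ℕ) : Prop :=
  ∀ (V : Type), Finite V → ∀ I : Instance A V, I.NonTrivial → I.Minimal k ℓ →
    (∃ J : Instance A V, J.OfInjCSP S ∧ I.EquivTo J) → ∃ f, I.Solution f

/-- `S` has strict width `k`. -/
def StrictWidth (S : StructOn σ A) (k : ℕ) : Prop :=
  ∃ ℓ : ℕ, k < ℓ ∧ ∀ (V : Type), Finite V → ∀ I : Instance A V,
    I.OfCSP S → I.Minimal k ℓ → ∀ (U : Set V) (g : ↥U → A),
      (∀ C ∈ I.cons, ∃ h ∈ C.val, ∀ (x : V) (hU : x ∈ U) (hC : x ∈ C.scope),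
        g ⟨x, hU⟩ = h ⟨x, hC⟩) →
      ∃ f, I.Solution f ∧ ∀ x : ↥U, f x.1 = g x

def BoundedStrictWidth (S : StructOn σ A) : Prop :=
  ∃ k : ℕ, 1 ≤ k ∧ StrictWidth S k

/-! ### Implications -/

/-- Projection of a set of assignments onto a tuple of variables. -/
def proj {V : Type} {k : ℕ} (u : Fin k → V) (Φ : Set (V → A)) : Set (Fin k → A) :=
  (fun f => f ∘ u) '' Φ

/-- The data of a pp-formula with distinguished tuples of variables `u`, `v`:
a variable set `V`, the set `Φ` of satisfying assignments, and the tuples. -/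
structure ImplData (A : Type) (k m : ℕ) where
  V : Type
  Φ : Set (V → A)
  u : Fin k → V
  v : Fin m → V

variable {k m n : ℕ}

/-- `φ` is a `(C,u,D,v)`-pre-implication in `S` (items (2)-(5) of the definition of an
implication, together with the ambient conditions of that definition). -/
structure ImplData.IsPreImplication (φ : ImplData A k m) (S : StructOn σ A)
    (C : Set (Fin k → A)) (D : Set (Fin m → A)) : Prop where
  finV : Finite φ.V
  u_inj : Function.Injective φ.u
  v_inj : Function.Injective φ.v
  hk : k < Nat.card φ.V
  hm : m < Nat.card φ.V
  cover : Set.range φ.u ∪ Set.range φ.v = Set.univ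
  C_ne : C.Nonempty
  D_ne : D.Nonempty
  C_pp : ppDefinable S C
  D_pp : ppDefinable S D
  Φ_pp : ppDefinable S φ.Φ
  C_proper : C ⊂ proj φ.u φ.Φ
  D_proper : D ⊂ proj φ.v φ.Φ
  forward : ∀ f ∈ φ.Φ, f ∘ φ.u ∈ C → f ∘ φ.v ∈ D
  surj : ∀ a ∈ D, ∃ f ∈ φ.Φ, f ∘ φ.u ∈ C ∧ f ∘ φ.v = a

/-- `φ` is a `(C,u,D,v)`-implication in `S`. -/
def ImplData.IsImplication (φ : ImplData A k m) (S : StructOn σ A)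
    (C : Set (Fin k → A)) (D : Set (Fin m → A)) : Prop :=
  φ.IsPreImplication S C D ∧ ∀ x y : φ.V, x ≠ y → ∃ f ∈ φ.Φ, f x ≠ f y

/-- The implication `φ` is injective: all its satisfying assignments are injective. -/
def ImplData.Injective' (φ : ImplData A k m) : Prop :=
  ∀ f ∈ φ.Φ, Function.Injective f

/-- `f` is an `OP`-mapping of `φ`. -/
def ImplData.IsOPMap (φ : ImplData A k m) (O : Set (Fin k → A)) (P : Set (Fin m → A))
    (f : φ.V → A) : Prop :=
  f ∈ φ.Φ ∧ f ∘ φ.u ∈ O ∧ f ∘ φ.v ∈ P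

/-- Restriction of `φ` to its injective satisfying assignments. -/
def ImplData.injRestrict (φ : ImplData A k m) : ImplData A k m :=
  ⟨φ.V, {f ∈ φ.Φ | Function.Injective f}, φ.u, φ.v⟩

/-! ### Composition of implications -/

/-- The identification of the second distinguished tuple of `φ1` with the first
distinguished tuple of `φ2` (i.e. the renaming `v1 = u2` with no other shared
variables). -/
def compRel (φ1 : ImplData A k m) (φ2 : ImplData A m n) :
    (φ1.V ⊕ φ2.V) → (φ1.V ⊕ φ2.V) → Prop :=
  fun x y => ∃ i : Fin m, x = Sum.inl (φ1.v i) ∧ y = Sum.inr (φ2.u i)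

/-- The composition `φ1 ∘ φ2`: the conjunction `φ1 ∧ φ2` (with `v1` renamed to `u2`),
with all variables not among the entries of `u1` and `v2` existentially quantified. -/
def ImplData.comp (φ1 : ImplData A k m) (φ2 : ImplData A m n) : ImplData A k n where
  V := {q : Quot (compRel φ1 φ2) //
        q ∈ Set.range (fun x => Quot.mk (compRel φ1 φ2) (Sum.inl (φ1.u x))) ∪
            Set.range (fun x => Quot.mk (compRel φ1 φ2) (Sum.inr (φ2.v x)))}
  Φ := {f | ∃ h : Quot (compRel φ1 φ2) → A,
        (fun x => h (Quot.mk (compRel φ1 φ2) (Sum.inl x))) ∈ φ1.Φ ∧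
        (fun x => h (Quot.mk (compRel φ1 φ2) (Sum.inr x))) ∈ φ2.Φ ∧
        ∀ q, f q = h q.1}
  u := fun i => ⟨Quot.mk (compRel φ1 φ2) (Sum.inl (φ1.u i)),
        Set.mem_union_left _ (Set.mem_range_self i)⟩
  v := fun i => ⟨Quot.mk (compRel φ1 φ2) (Sum.inr (φ2.v i)),
        Set.mem_union_right _ (Set.mem_range_self i)⟩

/-- `ψ^{∘n}`: the `n`-fold composition of `ψ` with itself (`ψ` appears `n` times). -/
def ImplData.pow (ψ : ImplData A k k) : ℕ → ImplData A k k
  | 0 => ψ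
  | 1 => ψ
  | (n + 2) => (ImplData.pow ψ (n + 1)).comp ψ

/-! ### The digraph of an implication -/

/-- The vertex set `Vert(E)`: orbits under `Aut(B)` contained in `E`. -/
def VertOf (Bstr : StructOn σ A) {k : ℕ} (E : Set (Fin k → A)) : Set (Set (Fin k → A)) :=
  {O | IsAutOrbit Bstr O ∧ O ⊆ E}

/-- The arc relation of the digraph `B_φ` on `Vert(E)`. -/
def ArcOn (Bstr : StructOn σ A) (φ : ImplData A k k) (E : Set (Fin k → A))
    (O P : Set (Fin k → A)) : Prop :=
  O ∈ VertOf Bstr E ∧ P ∈ VertOf Bstr E ∧ ∃ f, φ.IsOPMap O P f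

/-- `Scc` is a strongly connected component of `B_φ`. -/
def IsSCC (Bstr : StructOn σ A) (φ : ImplData A k k) (E : Set (Fin k → A))
    (Scc : Set (Set (Fin k → A))) : Prop :=
  Scc ⊆ VertOf Bstr E ∧
  (∀ O ∈ Scc, ∀ P ∈ Scc, Relation.TransGen (ArcOn Bstr φ E) O P) ∧
  ∀ S' : Set (Set (Fin k → A)), Scc ⊆ S' → S' ⊆ VertOf Bstr E →
    (∀ O ∈ S', ∀ P ∈ S', Relation.TransGen (ArcOn Bstr φ E) O P) → S' = Scc

def IsSink (Bstr : StructOn σ A) (φ : ImplData A k k) (E : Set (Fin k → A))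
    (Scc : Set (Set (Fin k → A))) : Prop :=
  ∀ O ∈ Scc, ∀ P, ArcOn Bstr φ E O P → P ∈ Scc

def IsSource (Bstr : StructOn σ A) (φ : ImplData A k k) (E : Set (Fin k → A))
    (Scc : Set (Set (Fin k → A))) : Prop :=
  ∀ P ∈ Scc, ∀ O, ArcOn Bstr φ E O P → O ∈ Scc

/-- `φ` is a complete implication (with respect to the ground structure `Bstr`). -/
def IsComplete (Bstr : StructOn σ A) (φ : ImplData A k k) : Prop :=
  proj φ.u φ.Φ = proj φ.v φ.Φ ∧
  Nat.card (φ.comp φ).V = Nat.card φ.V ∧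
  (∀ i : Fin k, φ.u i ∈ Set.range φ.v → φ.u i = φ.v i) ∧
  ∀ Scc, IsSCC Bstr φ (proj φ.u φ.Φ) Scc →
    ∀ O ∈ Scc, ∀ P ∈ Scc, ArcOn Bstr φ (proj φ.u φ.Φ) O P

/-! ### The injective implication graph -/

/-- `(C1, C)` (given as `(P.1, P.2)`) is a vertex of the `k`-ary injective implication
graph of `S`. -/
def InjVertex (S : StructOn σ A) (k : ℕ) (P : Set (Fin k → A) × Set (Fin k → A)) : Prop :=
  P.2.Nonempty ∧ P.2 ⊂ P.1 ∧ ppDefinable S P.1 ∧ ppDefinable S P.2 ∧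
    ∀ t ∈ P.2, Function.Injective t

/-- Arc of the `k`-ary injective implication graph of `S`. -/
def InjImplArc (S : StructOn σ A) (k : ℕ)
    (P Q : Set (Fin k → A) × Set (Fin k → A)) : Prop :=
  InjVertex S k P ∧ InjVertex S k Q ∧ P ≠ Q ∧
  ∃ φ : ImplData A k k, φ.IsImplication S P.2 Q.2 ∧ φ.Injective' ∧
    proj φ.u φ.Φ = P.1 ∧ proj φ.v φ.Φ = Q.1

/-- `S` is implicationally simple on injective instances: the `k`-ary injective
implication graph of `S` is acyclic (contains no directed cycle). -/
def ImplSimpleInj (S : StructOn σ A) (k : ℕ) : Prop :=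
  ¬ ∃ (nn : ℕ) (p : ℕ → Set (Fin k → A) × Set (Fin k → A)),
      0 < nn ∧ p 0 = p nn ∧ ∀ i < nn, InjImplArc S k (p i) (p (i + 1))

/-! ### Critical formulas -/

/-- `φ` is critical in `S` over `(C, D, φ.u, φ.v)`. -/
structure IsCritical (S : StructOn σ A) (φ : ImplData A k k)
    (C D : Set (Fin k → A)) : Prop where
  disj : Disjoint C D
  C_inj : ∀ t ∈ C, Function.Injective t
  D_inj : ∀ t ∈ D, Function.Injective t
  D_pp : ppDefinable S D
  card_V : Nat.card φ.V = k + 1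
  kpos : 0 < k
  u0 : φ.u ⟨0, kpos⟩ ∉ Set.range φ.u ∩ Set.range φ.v
  v0 : φ.v ⟨0, kpos⟩ ∉ Set.range φ.u ∩ Set.range φ.v
  impl : φ.IsImplication S C C
  D_proper_u : D ⊂ proj φ.u φ.Φ
  proju_inj : ∀ t ∈ proj φ.u φ.Φ, Function.Injective t
  D_proper_v : D ⊂ proj φ.v φ.Φ
  projv_inj : ∀ t ∈ proj φ.v φ.Φ, Function.Injective t
  surjD : ∀ a ∈ D, ∃ f ∈ φ.Φ, f ∘ φ.u ∈ D ∧ f ∘ φ.v = a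

/-! ### Boolean combinations -/

inductive BoolComb {β : Type} (basic : Set (Set β)) : Set β → Prop
  | of (s : Set β) (hs : s ∈ basic) : BoolComb basic s
  | univ : BoolComb basic Set.univ
  | compl (s : Set β) : BoolComb basic s → BoolComb basic sᶜ
  | inter (s t : Set β) : BoolComb basic s → BoolComb basic t → BoolComb basic (s ∩ t)

section Aux

variable {A : Type} {σ : Sig}

lemma sumElim_comp_sumMap {α β γ δ : Type} (t : β → A) (e : δ → A) (g : α → β) (g' : γ → δ) :
    Sum.elim t e ∘ Sum.map g g' = Sum.elim (t ∘ g) (e ∘ g') := by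
  funext x; cases x <;> rfl

lemma ppDefinable_inv {S : StructOn σ A} {α : Type} {R : Set (α → A)}
    (hR : ppDefinable S R) (g : A → A)
    (hg : ∀ i, ∀ t ∈ S.rel i, (g ∘ t) ∈ S.rel i) :
    ∀ f ∈ R, (g ∘ f) ∈ R := by
  obtain ⟨m, atoms, eqs, rfl⟩ := hR
  rintro f ⟨e, ha, he⟩
  have key : ∀ x, Sum.elim (g ∘ f) (g ∘ e) x = g (Sum.elim f e x) := by rintro (x | x) <;> rfl
  refine ⟨g ∘ e, fun c hc => ?_, fun p hp => ?_⟩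
  · have h2 := hg _ _ (ha c hc)
    have h3 : Sum.elim (g ∘ f) (g ∘ e) ∘ c.2 = g ∘ (Sum.elim f e ∘ c.2) := by
      funext j; exact key (c.2 j)
    rw [h3]; exact h2
  · rw [key, key, he p hp]

lemma ppDefinable_precomp {S : StructOn σ A} {α β : Type} {R : Set (α → A)}
    (hR : ppDefinable S R) (g : α → β) :
    ppDefinable S {t : β → A | t ∘ g ∈ R} := by
  obtain ⟨m, atoms, eqs, hR⟩ := hR
  refine ⟨m, atoms.map (fun c => ⟨c.1, Sum.map g id ∘ c.2⟩),
    eqs.map (fun p => (Sum.map g id p.1, Sum.map g id p.2)), ?_⟩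
  ext t
  have key : ∀ e : Fin m → A, Sum.elim t e ∘ Sum.map g (id : Fin m → Fin m) = Sum.elim (t ∘ g) e :=
    fun e => sumElim_comp_sumMap t e g id
  have key2 : ∀ (e : Fin m → A) (c : (i : σ.ι) × (Fin (σ.arity i) → α ⊕ Fin m)),
      Sum.elim t e ∘ (Sum.map g id ∘ c.2) = Sum.elim (t ∘ g) e ∘ c.2 := by
    intro e c; funext j; exact congrFun (key e) (c.2 j)
  simp only [Set.mem_setOf_eq, hR]
  constructor
  · rintro ⟨e, ha, he⟩
    refine ⟨e, fun c hc => ?_, fun p hp => ?_⟩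
    · rw [List.mem_map] at hc
      obtain ⟨c', hc', rfl⟩ := hc
      rw [show ((⟨c'.1, Sum.map g id ∘ c'.2⟩ : (i : σ.ι) × (Fin (σ.arity i) → β ⊕ Fin m)) : (i : σ.ι) × _).2 = Sum.map g id ∘ c'.2 from rfl,
        key2 e c']
      exact ha c' hc'
    · rw [List.mem_map] at hp
      obtain ⟨p', hp', rfl⟩ := hp
      have h2 := he p' hp'
      rw [← congrFun (key e) p'.1, ← congrFun (key e) p'.2] at h2
      exact h2
  · rintro ⟨e, ha, he⟩
    refine ⟨e, fun c hc => ?_, fun p hp => ?_⟩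
    · have h2 := ha ⟨c.1, Sum.map g id ∘ c.2⟩ (List.mem_map_of_mem hc)
      rw [key2 e c] at h2
      exact h2
    · have h2 := he (Sum.map g id p.1, Sum.map g id p.2) (List.mem_map_of_mem hp)
      exact (congrFun (key e) p.1).symm.trans (h2.trans (congrFun (key e) p.2))

lemma ppDefinable_inter {S : StructOn σ A} {α : Type} {R1 R2 : Set (α → A)}
    (h1 : ppDefinable S R1) (h2 : ppDefinable S R2) : ppDefinable S (R1 ∩ R2) := by
  obtain ⟨m1, a1, q1, hR1⟩ := h1
  obtain ⟨m2, a2, q2, hR2⟩ := h2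
  let j1 : α ⊕ Fin m1 → α ⊕ Fin (m1 + m2) := Sum.map id (Fin.castAdd m2)
  let j2 : α ⊕ Fin m2 → α ⊕ Fin (m1 + m2) := Sum.map id (Fin.natAdd m1)
  refine ⟨m1 + m2, a1.map (fun c => ⟨c.1, j1 ∘ c.2⟩) ++ a2.map (fun c => ⟨c.1, j2 ∘ c.2⟩),
    q1.map (fun p => (j1 p.1, j1 p.2)) ++ q2.map (fun p => (j2 p.1, j2 p.2)), ?_⟩
  ext t
  have key1 : ∀ e : Fin (m1 + m2) → A, Sum.elim t e ∘ j1 = Sum.elim t (e ∘ Fin.castAdd m2) :=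
    fun e => sumElim_comp_sumMap t e id (Fin.castAdd m2)
  have key2 : ∀ e : Fin (m1 + m2) → A, Sum.elim t e ∘ j2 = Sum.elim t (e ∘ Fin.natAdd m1) :=
    fun e => sumElim_comp_sumMap t e id (Fin.natAdd m1)
  simp only [Set.mem_inter_iff, Set.mem_setOf_eq, hR1, hR2]
  constructor
  · rintro ⟨⟨e1, ha1, he1⟩, ⟨e2, ha2, he2⟩⟩
    refine ⟨Fin.addCases e1 e2, fun c hc => ?_, fun p hp => ?_⟩
    · have hcl : (Fin.addCases e1 e2 : Fin (m1+m2) → A) ∘ Fin.castAdd m2 = e1 := by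
        funext i; exact @Fin.addCases_left m1 m2 (fun _ => A) e1 e2 i
      have hcr : (Fin.addCases e1 e2 : Fin (m1+m2) → A) ∘ Fin.natAdd m1 = e2 := by
        funext i; exact @Fin.addCases_right m1 m2 (fun _ => A) e1 e2 i
      rw [List.mem_append] at hc
      rcases hc with hc | hc <;> rw [List.mem_map] at hc <;> obtain ⟨c', hc', rfl⟩ := hc
      · have h3 : Sum.elim t (Fin.addCases e1 e2) ∘ (j1 ∘ c'.2) = Sum.elim t e1 ∘ c'.2 := by
          funext j
          have := congrFun (key1 (Fin.addCases e1 e2)) (c'.2 j)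
          rw [hcl] at this
          exact this
        rw [show ((⟨c'.1, j1 ∘ c'.2⟩ : (i : σ.ι) × (Fin (σ.arity i) → α ⊕ Fin (m1+m2)))).2 = j1 ∘ c'.2 from rfl, h3]
        exact ha1 c' hc'
      · have h3 : Sum.elim t (Fin.addCases e1 e2) ∘ (j2 ∘ c'.2) = Sum.elim t e2 ∘ c'.2 := by
          funext j
          have := congrFun (key2 (Fin.addCases e1 e2)) (c'.2 j)
          rw [hcr] at this
          exact this
        rw [show ((⟨c'.1, j2 ∘ c'.2⟩ : (i : σ.ι) × (Fin (σ.arity i) → α ⊕ Fin (m1+m2)))).2 = j2 ∘ c'.2 from rfl, h3]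
        exact ha2 c' hc'
    · have hcl : (Fin.addCases e1 e2 : Fin (m1+m2) → A) ∘ Fin.castAdd m2 = e1 := by
        funext i; exact @Fin.addCases_left m1 m2 (fun _ => A) e1 e2 i
      have hcr : (Fin.addCases e1 e2 : Fin (m1+m2) → A) ∘ Fin.natAdd m1 = e2 := by
        funext i; exact @Fin.addCases_right m1 m2 (fun _ => A) e1 e2 i
      rw [List.mem_append] at hp
      rcases hp with hp | hp <;> rw [List.mem_map] at hp <;> obtain ⟨p', hp', rfl⟩ := hp
      · have k1 := congrFun (key1 (Fin.addCases e1 e2)) p'.1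
        have k2 := congrFun (key1 (Fin.addCases e1 e2)) p'.2
        rw [hcl] at k1 k2
        exact k1.trans ((he1 p' hp').trans k2.symm)
      · have k1 := congrFun (key2 (Fin.addCases e1 e2)) p'.1
        have k2 := congrFun (key2 (Fin.addCases e1 e2)) p'.2
        rw [hcr] at k1 k2
        exact k1.trans ((he2 p' hp').trans k2.symm)
  · rintro ⟨e, ha, he⟩
    constructor
    · refine ⟨e ∘ Fin.castAdd m2, fun c hc => ?_, fun p hp => ?_⟩
      · have h2 := ha ⟨c.1, j1 ∘ c.2⟩
          (List.mem_append_left _ (List.mem_map_of_mem hc))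
        have h3 : Sum.elim t e ∘ (j1 ∘ c.2) = Sum.elim t (e ∘ Fin.castAdd m2) ∘ c.2 := by
          funext j; exact congrFun (key1 e) (c.2 j)
        rw [h3] at h2
        exact h2
      · have h2 := he (j1 p.1, j1 p.2)
          (List.mem_append_left _ (List.mem_map_of_mem hp))
        exact (congrFun (key1 e) p.1).symm.trans (h2.trans (congrFun (key1 e) p.2))
    · refine ⟨e ∘ Fin.natAdd m1, fun c hc => ?_, fun p hp => ?_⟩
      · have h2 := ha ⟨c.1, j2 ∘ c.2⟩
          (List.mem_append_right _ (List.mem_map_of_mem hc))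
        have h3 : Sum.elim t e ∘ (j2 ∘ c.2) = Sum.elim t (e ∘ Fin.natAdd m1) ∘ c.2 := by
          funext j; exact congrFun (key2 e) (c.2 j)
        rw [h3] at h2
        exact h2
      · have h2 := he (j2 p.1, j2 p.2)
          (List.mem_append_right _ (List.mem_map_of_mem hp))
        exact (congrFun (key2 e) p.1).symm.trans (h2.trans (congrFun (key2 e) p.2))

lemma ppDefinable_projMap {S : StructOn σ A} {α β : Type} [Finite α] [Finite β]
    {Ψ : Set (β → A)} (hΨ : ppDefinable S Ψ) (g : α → β) :
    ppDefinable S {t : α → A | ∃ h ∈ Ψ, ∀ x, t x = h (g x)} := by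
  classical
  haveI := Fintype.ofFinite α
  haveI := Fintype.ofFinite β
  obtain ⟨m2, a2, q2, hΨ⟩ := hΨ
  set N := Fintype.card β with hN
  let enum : β ≃ Fin N := Fintype.equivFin β
  let vm : β ⊕ Fin m2 → α ⊕ Fin (N + m2) :=
    Sum.elim (fun b => Sum.inr (Fin.castAdd m2 (enum b))) (fun j => Sum.inr (Fin.natAdd N j))
  refine ⟨N + m2, a2.map (fun c => ⟨c.1, vm ∘ c.2⟩),
    q2.map (fun p => (vm p.1, vm p.2)) ++
      (Finset.univ : Finset α).toList.map (fun x => (Sum.inl x, vm (Sum.inl (g x)))), ?_⟩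
  ext t
  simp only [Set.mem_setOf_eq, hΨ]
  constructor
  · rintro ⟨h, ⟨eh, ha, he⟩, ht⟩
    set e : Fin (N + m2) → A := Fin.addCases (h ∘ enum.symm) eh with hedef
    have key : Sum.elim t e ∘ vm = Sum.elim h eh := by
      funext x
      cases x with
      | inl b =>
        show Fin.addCases (motive := fun _ => A) (h ∘ enum.symm) eh (Fin.castAdd m2 (enum b)) = h b
        rw [@Fin.addCases_left N m2 (fun _ => A) (h ∘ enum.symm) eh (enum b)]
        show h (enum.symm (enum b)) = h b
        rw [Equiv.symm_apply_apply]
      | inr j =>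
        exact @Fin.addCases_right N m2 (fun _ => A) (h ∘ enum.symm) eh j
    refine ⟨e, fun c hc => ?_, fun p hp => ?_⟩
    · rw [List.mem_map] at hc
      obtain ⟨c', hc', rfl⟩ := hc
      have h3 : Sum.elim t e ∘ (vm ∘ c'.2) = Sum.elim h eh ∘ c'.2 := by
        funext j; exact congrFun key (c'.2 j)
      rw [show ((⟨c'.1, vm ∘ c'.2⟩ : (i : σ.ι) × (Fin (σ.arity i) → α ⊕ Fin (N+m2)))).2 = vm ∘ c'.2 from rfl, h3]
      exact ha c' hc'
    · rw [List.mem_append] at hp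
      rcases hp with hp | hp
      · rw [List.mem_map] at hp
        obtain ⟨p', hp', rfl⟩ := hp
        exact (congrFun key p'.1).trans ((he p' hp').trans (congrFun key p'.2).symm)
      · rw [List.mem_map] at hp
        obtain ⟨x, _, rfl⟩ := hp
        show t x = Sum.elim t e (vm (Sum.inl (g x)))
        have : Sum.elim t e (vm (Sum.inl (g x))) = h (g x) := congrFun key (Sum.inl (g x))
        rw [this]
        exact ht x
  · rintro ⟨e, ha, he⟩
    set h : β → A := fun b => e (Fin.castAdd m2 (enum b)) with hhdef
    set eh : Fin m2 → A := e ∘ Fin.natAdd N with hehdef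
    have key : Sum.elim t e ∘ vm = Sum.elim h eh := by
      funext x; cases x <;> rfl
    refine ⟨h, ⟨eh, fun c hc => ?_, fun p hp => ?_⟩, fun x => ?_⟩
    · have h2 := ha ⟨c.1, vm ∘ c.2⟩ (List.mem_map_of_mem hc)
      have h3 : Sum.elim t e ∘ (vm ∘ c.2) = Sum.elim h eh ∘ c.2 := by
        funext j; exact congrFun key (c.2 j)
      rw [h3] at h2
      exact h2
    · have h2 := he (vm p.1, vm p.2)
        (List.mem_append_left _ (List.mem_map_of_mem hp))
      exact (congrFun key p.1).symm.trans (h2.trans (congrFun key p.2))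
    · have h2 := he (Sum.inl x, vm (Sum.inl (g x)))
        (List.mem_append_right _ (List.mem_map_of_mem (Finset.mem_toList.mpr (Finset.mem_univ x))))
      exact h2.trans (congrFun key (Sum.inl (g x)))


lemma orbit_inv {G : Subgroup (Equiv.Perm A)} {n : ℕ} {O : Set (Fin n → A)} (hO : IsGOrbit G O)
    {g : Equiv.Perm A} (hg : g ∈ G) (t : Fin n → A) : t ∈ O ↔ ⇑g ∘ t ∈ O := by
  obtain ⟨t0, rfl⟩ := hO
  constructor
  · rintro ⟨h, hh, rfl⟩
    refine ⟨g * h, G.mul_mem hg hh, ?_⟩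
    funext i
    exact (Equiv.Perm.mul_apply g h (t0 i)).symm
  · rintro ⟨h, hh, he⟩
    refine ⟨g⁻¹ * h, G.mul_mem (G.inv_mem hg) hh, ?_⟩
    funext i
    have h2 : g (t i) = h (t0 i) := congrFun he i
    show t i = (g⁻¹ * h) (t0 i)
    rw [Equiv.Perm.mul_apply, ← h2, Equiv.Perm.inv_def, Equiv.symm_apply_apply]

lemma foDefinable_inv (S : StructOn σ A) {α : Type} {R : Set (α → A)}
    (hR : foDefinable S R) (g : Equiv.Perm A)
    (hg : ∀ i (t : Fin (σ.arity i) → A), t ∈ S.rel i ↔ ⇑g ∘ t ∈ S.rel i) :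
    ∀ f ∈ R, ⇑g ∘ f ∈ R := by
  letI := structureOf S
  obtain ⟨φ, hφ⟩ := (Set.empty_definable_iff).mp hR
  intro f hf
  let E : FirstOrder.Language.Equiv (sigLang σ) A A :=
    { toEquiv := g
      map_fun' := by intro n fn x; exact fn.elim
      map_rel' := by
        intro n r x
        exact (hg r.1 (fun j => x (Fin.cast r.2 j))).symm }
  rw [hφ] at hf ⊢
  exact (FirstOrder.Language.StrongHomClass.realize_formula E φ).mpr hf

lemma pp_orbit_inv {G : Subgroup (Equiv.Perm A)} {k : ℕ} {σ' : Sig} {Astr : StructOn σ' A}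
    (hexp : IsFOExpansion (canonStruct G k) Astr)
    {α : Type} {R : Set (α → A)} (hR : ppDefinable Astr R)
    {g : Equiv.Perm A} (hg : g ∈ G) :
    ∀ f ∈ R, ⇑g ∘ f ∈ R := by
  refine ppDefinable_inv hR ⇑g (fun i t ht => ?_)
  exact foDefinable_inv (canonStruct G k) (hexp.2 i) g
    (fun i' t' => orbit_inv i'.2 hg t') t ht

/-! Lemmas about composition of implications -/

section Comp

variable {k m n : ℕ} (φ1 : ImplData A k m) (φ2 : ImplData A m n)

lemma comp_glue {f1 : φ1.V → A} {f2 : φ2.V → A}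
    (h1 : f1 ∈ φ1.Φ) (h2 : f2 ∈ φ2.Φ) (h : f1 ∘ φ1.v = f2 ∘ φ2.u) :
    ∃ f ∈ (φ1.comp φ2).Φ, f ∘ (φ1.comp φ2).u = f1 ∘ φ1.u ∧ f ∘ (φ1.comp φ2).v = f2 ∘ φ2.v := by
  have hresp : ∀ x y, compRel φ1 φ2 x y → Sum.elim f1 f2 x = Sum.elim f1 f2 y := by
    rintro x y ⟨i, rfl, rfl⟩
    exact congrFun h i
  let h0 : Quot (compRel φ1 φ2) → A := Quot.lift (Sum.elim f1 f2) hresp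
  exact ⟨fun q => h0 q.1, ⟨h0, h1, h2, fun q => rfl⟩, rfl, rfl⟩

lemma comp_split {f : (φ1.comp φ2).V → A} (hf : f ∈ (φ1.comp φ2).Φ) :
    ∃ f1 ∈ φ1.Φ, ∃ f2 ∈ φ2.Φ, f1 ∘ φ1.v = f2 ∘ φ2.u ∧
      f ∘ (φ1.comp φ2).u = f1 ∘ φ1.u ∧ f ∘ (φ1.comp φ2).v = f2 ∘ φ2.v := by
  obtain ⟨h, hh1, hh2, hfq⟩ := hf
  refine ⟨_, hh1, _, hh2, ?_, ?_, ?_⟩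
  · funext i
    exact congrArg h (Quot.sound ⟨i, rfl, rfl⟩)
  · funext i
    exact hfq _
  · funext i
    exact hfq _

open Classical in
noncomputable def compRetr : (φ1.V ⊕ φ2.V) → (φ1.V ⊕ φ2.V) := fun x =>
  match x with
  | Sum.inl a => if h : ∃ i, a = φ1.v i then Sum.inr (φ2.u h.choose) else Sum.inl a
  | Sum.inr b => Sum.inr b

open Classical in
lemma compRetr_inl (a : φ1.V) :
    compRetr φ1 φ2 (Sum.inl a) =
      if h : ∃ i, a = φ1.v i then Sum.inr (φ2.u h.choose) else Sum.inl a := rfl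

lemma compRetr_resp (hv : Function.Injective φ1.v) :
    ∀ x y, compRel φ1 φ2 x y → compRetr φ1 φ2 x = compRetr φ1 φ2 y := by
  rintro x y ⟨i, rfl, rfl⟩
  have hex : ∃ j, φ1.v i = φ1.v j := ⟨i, rfl⟩
  rw [show compRetr φ1 φ2 (Sum.inr (φ2.u i)) = Sum.inr (φ2.u i) from rfl,
    compRetr_inl, dif_pos hex]
  exact congrArg Sum.inr (congrArg φ2.u (hv hex.choose_spec).symm)

noncomputable def compRetrQ (hv : Function.Injective φ1.v) :
    Quot (compRel φ1 φ2) → (φ1.V ⊕ φ2.V) :=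
  Quot.lift (compRetr φ1 φ2) (compRetr_resp φ1 φ2 hv)

lemma comp_mk_inr (hv : Function.Injective φ1.v) (b : φ2.V) :
    compRetrQ φ1 φ2 hv (Quot.mk _ (Sum.inr b)) = Sum.inr b := rfl

lemma comp_mk_inl_inj (hv : Function.Injective φ1.v) (hu : Function.Injective φ2.u) :
    Function.Injective (fun x : φ1.V => Quot.mk (compRel φ1 φ2) (Sum.inl x)) := by
  intro a b hab
  have h2 : compRetr φ1 φ2 (Sum.inl a) = compRetr φ1 φ2 (Sum.inl b) :=
    congrArg (compRetrQ φ1 φ2 hv) hab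
  rw [compRetr_inl, compRetr_inl] at h2
  by_cases ha : ∃ i, a = φ1.v i <;> by_cases hb : ∃ i, b = φ1.v i
  · rw [dif_pos ha, dif_pos hb] at h2
    rw [ha.choose_spec, hb.choose_spec]
    exact congrArg φ1.v (hu (Sum.inr.inj h2))
  · rw [dif_pos ha, dif_neg hb] at h2
    exact absurd h2 Sum.inr_ne_inl
  · rw [dif_neg ha, dif_pos hb] at h2
    exact absurd h2 Sum.inl_ne_inr
  · rw [dif_neg ha, dif_neg hb] at h2
    exact Sum.inl.inj h2

lemma comp_mk_inr_inj (hv : Function.Injective φ1.v) :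
    Function.Injective (fun x : φ2.V => Quot.mk (compRel φ1 φ2) (Sum.inr x)) := by
  intro a b hab
  exact Sum.inr.inj (congrArg (compRetrQ φ1 φ2 hv) hab)

lemma comp_mk_inl_ne_inr (hv : Function.Injective φ1.v) {a : φ1.V}
    (ha : a ∉ Set.range φ1.v) (b : φ2.V) :
    Quot.mk (compRel φ1 φ2) (Sum.inl a) ≠ Quot.mk (compRel φ1 φ2) (Sum.inr b) := by
  intro hcon
  have h2 : compRetr φ1 φ2 (Sum.inl a) = Sum.inr b := congrArg (compRetrQ φ1 φ2 hv) hcon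
  have hna : ¬ ∃ i, a = φ1.v i := by
    rintro ⟨i, rfl⟩
    exact ha ⟨i, rfl⟩
  rw [compRetr_inl, dif_neg hna] at h2
  exact Sum.inl_ne_inr h2

lemma comp_mk_inr_ne_inl (hv : Function.Injective φ1.v) {b : φ2.V}
    (hb : b ∉ Set.range φ2.u) (a : φ1.V) :
    Quot.mk (compRel φ1 φ2) (Sum.inr b) ≠ Quot.mk (compRel φ1 φ2) (Sum.inl a) := by
  intro hcon
  have h2 : Sum.inr b = compRetr φ1 φ2 (Sum.inl a) := congrArg (compRetrQ φ1 φ2 hv) hcon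
  rw [compRetr_inl] at h2
  by_cases ha : ∃ i, a = φ1.v i
  · rw [dif_pos ha] at h2
    exact hb ⟨_, (Sum.inr.inj h2).symm⟩
  · rw [dif_neg ha] at h2
    exact Sum.inr_ne_inl h2

lemma comp_proj_u (hproj : proj φ1.v φ1.Φ = proj φ2.u φ2.Φ) :
    proj (φ1.comp φ2).u (φ1.comp φ2).Φ = proj φ1.u φ1.Φ := by
  apply Set.Subset.antisymm
  · rintro _ ⟨f, hf, rfl⟩
    obtain ⟨f1, hf1, f2, hf2, hglue, hu, hv⟩ := comp_split φ1 φ2 hf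
    exact ⟨f1, hf1, hu.symm⟩
  · rintro _ ⟨f1, hf1, rfl⟩
    have hmem : f1 ∘ φ1.v ∈ proj φ2.u φ2.Φ := hproj ▸ ⟨f1, hf1, rfl⟩
    obtain ⟨f2, hf2, heq⟩ := hmem
    obtain ⟨f, hfΦ, hu, hv⟩ := comp_glue φ1 φ2 hf1 hf2 heq.symm
    exact ⟨f, hfΦ, hu⟩

lemma comp_proj_v (hproj : proj φ1.v φ1.Φ = proj φ2.u φ2.Φ) :
    proj (φ1.comp φ2).v (φ1.comp φ2).Φ = proj φ2.v φ2.Φ := by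
  apply Set.Subset.antisymm
  · rintro _ ⟨f, hf, rfl⟩
    obtain ⟨f1, hf1, f2, hf2, hglue, hu, hv⟩ := comp_split φ1 φ2 hf
    exact ⟨f2, hf2, hv.symm⟩
  · rintro _ ⟨f2, hf2, rfl⟩
    have hmem : f2 ∘ φ2.u ∈ proj φ1.v φ1.Φ := hproj.symm ▸ ⟨f2, hf2, rfl⟩
    obtain ⟨f1, hf1, heq⟩ := hmem
    obtain ⟨f, hfΦ, hu, hv⟩ := comp_glue φ1 φ2 hf1 hf2 heq
    exact ⟨f, hfΦ, hv⟩

lemma comp_Φ_pp {S : StructOn σ A} (h1 : ppDefinable S φ1.Φ) (h2 : ppDefinable S φ2.Φ)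
    (hfin1 : Finite φ1.V) (hfin2 : Finite φ2.V) :
    ppDefinable S (φ1.comp φ2).Φ := by
  haveI := hfin1
  haveI := hfin2
  haveI : Finite (Quot (compRel φ1 φ2)) := Quot.finite _
  haveI : Finite (φ1.comp φ2).V := Subtype.finite
  let g1 : φ1.V → Quot (compRel φ1 φ2) := fun x => Quot.mk _ (Sum.inl x)
  let g2 : φ2.V → Quot (compRel φ1 φ2) := fun x => Quot.mk _ (Sum.inr x)
  have hΨ : ppDefinable S ({h : Quot (compRel φ1 φ2) → A | h ∘ g1 ∈ φ1.Φ} ∩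
      {h | h ∘ g2 ∈ φ2.Φ}) :=
    ppDefinable_inter (ppDefinable_precomp h1 g1) (ppDefinable_precomp h2 g2)
  have := ppDefinable_projMap hΨ (fun q : (φ1.comp φ2).V => q.1)
  have hset : (φ1.comp φ2).Φ =
      {t : (φ1.comp φ2).V → A | ∃ h ∈ ({h : Quot (compRel φ1 φ2) → A | h ∘ g1 ∈ φ1.Φ} ∩
        {h | h ∘ g2 ∈ φ2.Φ}), ∀ x, t x = h x.1} := by
    ext f
    constructor
    · rintro ⟨h, ha, hb, hc⟩
      exact ⟨h, ⟨ha, hb⟩, hc⟩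
    · rintro ⟨h, ⟨ha, hb⟩, hc⟩
      exact ⟨h, ha, hb, hc⟩
  rw [hset]
  exact this


end Comp

end Aux

end CSPPaper
open CSPPaper in
/-- Lemma 3.17, first part: the composition of implications is a
pre-implication, and its `O1O3`-mappings are characterized via intermediate orbits. -/
theorem stmt11 {A : Type} (k : ℕ) (hk : 3 ≤ k) (G : Subgroup (Equiv.Perm A))
    {σ' : Sig} (Astr : StructOn σ' A)
    (hexp : IsFOExpansion (canonStruct G k) Astr)
    (C D E : Set (Fin k → A)) (φ1 φ2 : ImplData A k k)
    (h1 : φ1.IsImplication Astr C D) (h2 : φ2.IsImplication Astr D E)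
    (hproj : proj φ1.v φ1.Φ = proj φ2.u φ2.Φ) :
    (φ1.comp φ2).IsPreImplication Astr C E ∧
    ∀ O1 O3 : Set (Fin k → A),
      IsGOrbit G O1 → O1 ⊆ proj φ1.u φ1.Φ →
      IsGOrbit G O3 → O3 ⊆ proj φ2.v φ2.Φ →
      ((∃ f, (φ1.comp φ2).IsOPMap O1 O3 f) ↔
        ∃ O2 : Set (Fin k → A), IsGOrbit G O2 ∧
          (∃ f, φ1.IsOPMap O1 O2 f) ∧ ∃ f, φ2.IsOPMap O2 O3 f) := by
  obtain ⟨p1, d1⟩ := h1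
  obtain ⟨p2, d2⟩ := h2
  haveI hF1 : Finite φ1.V := p1.finV
  haveI hF2 : Finite φ2.V := p2.finV
  haveI : Finite (Quot (compRel φ1 φ2)) := Quot.finite _
  haveI hFc : Finite (φ1.comp φ2).V := Subtype.finite
  -- injectivity of the distinguished tuples
  have hu_inj : Function.Injective (φ1.comp φ2).u := by
    intro i j hij
    exact p1.u_inj (comp_mk_inl_inj φ1 φ2 p1.v_inj p2.u_inj (congrArg Subtype.val hij))
  have hv_inj : Function.Injective (φ1.comp φ2).v := by
    intro i j hij
    exact p2.v_inj (comp_mk_inr_inj φ1 φ2 p1.v_inj (congrArg Subtype.val hij))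
  -- a u1-entry outside the range of v1
  have hexu : ∃ i, φ1.u i ∉ Set.range φ1.v := by
    by_contra hall
    push_neg at hall
    have hsurj : Function.Surjective φ1.v := by
      intro x
      have hx : x ∈ Set.range φ1.u ∪ Set.range φ1.v := p1.cover ▸ Set.mem_univ x
      rcases hx with ⟨i, rfl⟩ | hx
      · exact hall i
      · exact hx
    have hle := Nat.card_le_card_of_surjective φ1.v hsurj
    have hcf : Nat.card (Fin k) = k := by simp [Nat.card_eq_fintype_card]
    have := p1.hm
    omega
  have hexv : ∃ j, φ2.v j ∉ Set.range φ2.u := by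
    by_contra hall
    push_neg at hall
    have hsurj : Function.Surjective φ2.u := by
      intro x
      have hx : x ∈ Set.range φ2.u ∪ Set.range φ2.v := p2.cover ▸ Set.mem_univ x
      rcases hx with hx | ⟨i, rfl⟩
      · exact hx
      · exact hall i
    have hle := Nat.card_le_card_of_surjective φ2.u hsurj
    have hcf : Nat.card (Fin k) = k := by simp [Nat.card_eq_fintype_card]
    have := p2.hk
    omega
  obtain ⟨iu, hiu⟩ := hexu
  obtain ⟨jv, hjv⟩ := hexv
  -- cardinality bound
  have hcard : k < Nat.card (φ1.comp φ2).V := by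
    have hw : ∃ w : Fin (k + 1) → (φ1.comp φ2).V, Function.Injective w := by
      classical
      refine ⟨fun j => if h : (j : ℕ) < k then (φ1.comp φ2).v ⟨j, h⟩ else (φ1.comp φ2).u iu, ?_⟩
      intro j1 j2 hj
      by_cases h1' : (j1 : ℕ) < k <;> by_cases h2' : (j2 : ℕ) < k
      · simp only [dif_pos h1', dif_pos h2'] at hj
        have h3 := hv_inj hj
        have h4 : (j1 : ℕ) = (j2 : ℕ) := congrArg (Fin.val : Fin k → ℕ) h3
        exact Fin.val_injective h4
      · simp only [dif_pos h1', dif_neg h2'] at hj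
        exact (comp_mk_inl_ne_inr φ1 φ2 p1.v_inj hiu _ (congrArg Subtype.val hj).symm).elim
      · simp only [dif_neg h1', dif_pos h2'] at hj
        exact (comp_mk_inl_ne_inr φ1 φ2 p1.v_inj hiu _ (congrArg Subtype.val hj)).elim
      · have e1 := j1.isLt
        have e2 := j2.isLt
        omega
    obtain ⟨w, hwinj⟩ := hw
    have hle := Nat.card_le_card_of_injective w hwinj
    have hcf : Nat.card (Fin (k + 1)) = k + 1 := by simp [Nat.card_eq_fintype_card]
    omega
  -- the pre-implication
  have hpre : (φ1.comp φ2).IsPreImplication Astr C E := by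
    refine ⟨hFc, hu_inj, hv_inj, hcard, hcard, ?_, p1.C_ne, p2.D_ne, p1.C_pp, p2.D_pp,
      comp_Φ_pp φ1 φ2 p1.Φ_pp p2.Φ_pp hF1 hF2, ?_, ?_, ?_, ?_⟩
    · -- cover
      rw [Set.eq_univ_iff_forall]
      rintro ⟨q, hq⟩
      rcases hq with ⟨i, hi⟩ | ⟨i, hi⟩
      · exact Or.inl ⟨i, Subtype.ext hi⟩
      · exact Or.inr ⟨i, Subtype.ext hi⟩
    · rw [comp_proj_u φ1 φ2 hproj]
      exact p1.C_proper
    · rw [comp_proj_v φ1 φ2 hproj]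
      exact p2.D_proper
    · -- forward
      intro f hf hC
      obtain ⟨f1, hf1, f2, hf2, hglue, hu, hv⟩ := comp_split φ1 φ2 hf
      rw [hu] at hC
      have hD : f1 ∘ φ1.v ∈ D := p1.forward f1 hf1 hC
      rw [hglue] at hD
      rw [hv]
      exact p2.forward f2 hf2 hD
    · -- surjectivity onto E
      intro a ha
      obtain ⟨f2, hf2, hD, hva⟩ := p2.surj a ha
      obtain ⟨f1, hf1, hC, hv1⟩ := p1.surj (f2 ∘ φ2.u) hD
      obtain ⟨f, hfΦ, hu, hv⟩ := comp_glue φ1 φ2 hf1 hf2 hv1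
      refine ⟨f, hfΦ, ?_, ?_⟩
      · rw [hu]
        exact hC
      · rw [hv]
        exact hva
  refine ⟨hpre, ?_⟩
  intro O1 O3 hO1 hO1sub hO3 hO3sub
  constructor
  · rintro ⟨f, hfΦ, hfu, hfv⟩
    obtain ⟨f1, hf1, f2, hf2, hglue, hu, hv⟩ := comp_split φ1 φ2 hfΦ
    refine ⟨orbitOf G (f1 ∘ φ1.v), ⟨_, rfl⟩, ⟨f1, hf1, ?_, ?_⟩, ⟨f2, hf2, ?_, ?_⟩⟩
    · rw [← hu]
      exact hfu
    · exact ⟨1, G.one_mem, by funext i; exact (Equiv.Perm.one_apply _).symm⟩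
    · rw [← hglue]
      exact ⟨1, G.one_mem, by funext i; exact (Equiv.Perm.one_apply _).symm⟩
    · rw [← hv]
      exact hfv
  · rintro ⟨O2, hO2, ⟨f1, hf1, hf1u, hf1v⟩, ⟨f2, hf2, hf2u, hf2v⟩⟩
    obtain ⟨t2, rfl⟩ := hO2
    obtain ⟨g1, hg1, he1⟩ := hf1v
    obtain ⟨g2, hg2, he2⟩ := hf2u
    set gg := g2 * g1⁻¹ with hgg
    have hgmem : gg ∈ G := G.mul_mem hg2 (G.inv_mem hg1)
    have hf1' : (⇑gg ∘ f1) ∈ φ1.Φ := pp_orbit_inv hexp p1.Φ_pp hgmem f1 hf1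
    have hglue : (⇑gg ∘ f1) ∘ φ1.v = f2 ∘ φ2.u := by
      funext i
      have e1 : f1 (φ1.v i) = g1 (t2 i) := congrFun he1 i
      have e2 : f2 (φ2.u i) = g2 (t2 i) := congrFun he2 i
      show gg (f1 (φ1.v i)) = f2 (φ2.u i)
      rw [e1, e2, hgg, Equiv.Perm.mul_apply, Equiv.Perm.inv_def, Equiv.symm_apply_apply]
    obtain ⟨f, hfΦ, hu, hv⟩ := comp_glue φ1 φ2 hf1' hf2 hglue
    refine ⟨f, hfΦ, ?_, ?_⟩
    · rw [hu]
      obtain ⟨t1, hO1e⟩ := hO1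
      rw [hO1e] at hf1u ⊢
      obtain ⟨h0, hh0, heq⟩ := hf1u
      refine ⟨gg * h0, G.mul_mem hgmem hh0, ?_⟩
      funext i
      have e3 : f1 (φ1.u i) = h0 (t1 i) := congrFun heq i
      show gg (f1 (φ1.u i)) = (gg * h0) (t1 i)
      rw [Equiv.Perm.mul_apply]
      exact congrArg gg e3
    · rw [hv]
      exact hf2v
end

section
/- Let k ≥ 3, let A be a first-order expansion of a k-neoliberal relational structure B, let C ⊆ A^k be non-empty, and let φ be a (C,u,C,v)-implication in A with proj_u(φ^A) = proj_v(φ^A) =: E. Then there exist strongly connected components S1 ⊆ Vert(C) and S2 ⊆ Vert(E∖C) of the digraph B_φ such that S1 is a sink in B_φ and S2 is a source in B_φ. Moreover, every vertex of B_φ has an outgoing and an incoming arc, i.e., B_φ is smooth. -/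
open Function Set

section Stmt14Aux
open CSPPaper Relation

variable {A : Type} {σ : Sig}

private lemma isAuto_id' (S : StructOn σ A) : IsAuto S id :=
  ⟨Function.bijective_id, fun _ _ => Iff.rfl⟩

private lemma isAuto_comp' {S : StructOn σ A} {g h : A → A} (hg : IsAuto S g)
    (hh : IsAuto S h) : IsAuto S (g ∘ h) :=
  ⟨hg.1.comp hh.1, fun i t => (hh.2 i t).trans (hg.2 i (h ∘ t))⟩

private lemma isAuto_inv' {S : StructOn σ A} {g : A → A} (hg : IsAuto S g) :
    ∃ g', IsAuto S g' ∧ g' ∘ g = id ∧ g ∘ g' = id := by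
  let e := Equiv.ofBijective g hg.1
  have hgg' : g ∘ ⇑e.symm = id := funext fun x => e.apply_symm_apply x
  have hg'g : ⇑e.symm ∘ g = id := funext fun x => e.symm_apply_apply x
  refine ⟨⇑e.symm, ⟨e.symm.bijective, fun i t => ?_⟩, hg'g, hgg'⟩
  have := hg.2 i (⇑e.symm ∘ t)
  have h2 : g ∘ (⇑e.symm ∘ t) = t := by
    rw [← Function.comp_assoc, hgg']; rfl
  rw [h2] at this
  exact this.symm

private lemma mem_autOrbit_self' (S : StructOn σ A) {n : ℕ} (t : Fin n → A) :
    t ∈ autOrbit S t :=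
  ⟨id, isAuto_id' S, rfl⟩

private lemma autOrbit_eq_of_mem' {S : StructOn σ A} {n : ℕ} {s t : Fin n → A}
    (h : s ∈ autOrbit S t) : autOrbit S s = autOrbit S t := by
  obtain ⟨g, hg, rfl⟩ := h
  obtain ⟨g', hg', hg'g, _⟩ := isAuto_inv' hg
  ext x
  constructor
  · rintro ⟨h, hh, rfl⟩
    exact ⟨h ∘ g, isAuto_comp' hh hg, by rw [Function.comp_assoc]⟩
  · rintro ⟨h, hh, rfl⟩
    refine ⟨h ∘ g', isAuto_comp' hh hg', ?_⟩
    rw [Function.comp_assoc, ← Function.comp_assoc g' g t, hg'g]; rfl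


private lemma foDefinable_comp_auto {S : StructOn σ A} {α : Type} {R : Set (α → A)}
    (hR : foDefinable S R) {g : A → A} (hg : IsAuto S g) {f : α → A} (hf : f ∈ R) :
    g ∘ f ∈ R := by
  letI := structureOf S
  rw [foDefinable, Set.empty_definable_iff] at hR
  obtain ⟨ψ, rfl⟩ := hR
  let e : (sigLang σ).Equiv A A :=
    { toEquiv := Equiv.ofBijective g hg.1
      map_fun' := fun {n} F _ => F.elim
      map_rel' := fun {n} r x => (hg.2 r.1 (fun j => x (Fin.cast r.2 j))).symm }
  exact (FirstOrder.Language.StrongHomClass.realize_formula e ψ (v := f)).2 hf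

/-- pp-definable relations over `Astr` are invariant under automorphisms of a structure
in which all relations of `Astr` are first-order definable. -/
private lemma ppDef_comp_auto {σ' : Sig} {Astr : StructOn σ' A} {Bst : StructOn σ A}
    (hdef : ∀ i', foDefinable Bst (Astr.rel i')) {α : Type} {R : Set (α → A)}
    (hR : ppDefinable Astr R) {g : A → A} (hg : IsAuto Bst g) {f : α → A} (hf : f ∈ R) :
    g ∘ f ∈ R := by
  obtain ⟨m, atoms, eqs, rfl⟩ := hR
  obtain ⟨e, hat, heq⟩ := hf
  have h1 : Sum.elim (g ∘ f) (g ∘ e) = g ∘ Sum.elim f e := by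
    funext x; cases x <;> rfl
  refine ⟨g ∘ e, fun c hc => ?_, fun p hp => ?_⟩
  · rw [h1]
    exact foDefinable_comp_auto (hdef c.1) hg (hat c hc)
  · rw [h1]
    simp only [Function.comp_apply]
    rw [heq p hp]

private lemma autOrbit_canon {k : ℕ} (G : Subgroup (Equiv.Perm A)) (t : Fin k → A) :
    autOrbit (canonStruct G k) t = orbitOf G t := by
  have hGauto : ∀ g ∈ G, IsAuto (canonStruct G k) ⇑g := by
    intro g hgG
    refine ⟨g.bijective, fun i s => ?_⟩
    obtain ⟨w, hw⟩ := i.2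
    show s ∈ i.1 ↔ ⇑g ∘ s ∈ i.1
    rw [hw]
    constructor
    · rintro ⟨h, hh, rfl⟩
      exact ⟨g * h, mul_mem hgG hh, by funext x; rfl⟩
    · rintro ⟨h, hh, hs⟩
      refine ⟨g⁻¹ * h, mul_mem (inv_mem hgG) hh, ?_⟩
      funext x
      have := congrFun hs x
      simp only [Function.comp_apply] at this ⊢
      exact (g.symm_apply_apply (s x)).symm.trans (congrArg (⇑g⁻¹) this)
  ext s
  constructor
  · rintro ⟨g, hg, rfl⟩
    have hmem : t ∈ orbitOf G t := ⟨1, one_mem G, by funext x; rfl⟩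
    exact (hg.2 ⟨orbitOf G t, t, rfl⟩ t).1 hmem
  · rintro ⟨g, hgG, rfl⟩
    exact ⟨⇑g, hGauto g hgG, rfl⟩

/-- In a finite digraph closed under successors in which every vertex has a successor,
there is a vertex on a cycle all of whose reachable vertices reach back. -/
private lemma exists_good_base {α : Type} {Arc : α → α → Prop} {W : Set α}
    (hfin : W.Finite) (hne : W.Nonempty)
    (closed : ∀ O ∈ W, ∀ P, Arc O P → P ∈ W)
    (succ : ∀ O ∈ W, ∃ P, Arc O P) :
    ∃ Q ∈ W, TransGen Arc Q Q ∧ ∀ P, TransGen Arc Q P → TransGen Arc P Q := by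
  classical
  have reach_mem : ∀ O ∈ W, ∀ P, TransGen Arc O P → P ∈ W := by
    intro O hO P h
    induction h with
    | single h => exact closed _ hO _ h
    | tail _ h ih => exact closed _ ih _ h
  set r : α → Set α := fun Q => {P | TransGen Arc Q P} with hr
  have rsubW : ∀ Q ∈ W, r Q ⊆ W := fun Q hQ P hP => reach_mem Q hQ P hP
  have rfin : ∀ Q ∈ W, (r Q).Finite := fun Q hQ => hfin.subset (rsubW Q hQ)
  obtain ⟨Q0, hQ0, hmin⟩ := Set.exists_min_image W (fun Q => (r Q).ncard) hfin hne
  obtain ⟨Q1, hQ1⟩ := succ Q0 hQ0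
  have hQ1W : Q1 ∈ W := closed _ hQ0 _ hQ1
  have hsub : r Q1 ⊆ r Q0 := fun P hP => (TransGen.single hQ1).trans hP
  have hcard : (r Q0).ncard ≤ (r Q1).ncard := hmin Q1 hQ1W
  have heq : r Q1 = r Q0 := Set.eq_of_subset_of_ncard_le hsub hcard (rfin Q0 hQ0)
  have hQ1r : Q1 ∈ r Q1 := heq ▸ TransGen.single hQ1
  refine ⟨Q1, hQ1W, hQ1r, fun P hP => ?_⟩
  have hPW : P ∈ W := reach_mem Q1 hQ1W P hP
  have hsub2 : r P ⊆ r Q1 := fun X hX => hP.trans hX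
  have hcard2 : (r Q1).ncard ≤ (r P).ncard := by
    calc (r Q1).ncard = (r Q0).ncard := by rw [heq]
    _ ≤ (r P).ncard := hmin P hPW
  have heq2 : r P = r Q1 := Set.eq_of_subset_of_ncard_le hsub2 hcard2 (rfin Q1 hQ1W)
  have : Q1 ∈ r P := heq2.symm ▸ hQ1r
  exact this

end Stmt14Aux

open CSPPaper in
/-- Observation 3.21: existence of a sink SCC inside `Vert(C)` and a
source SCC inside `Vert(E∖C)`, and smoothness of the digraph `B_φ`. -/
theorem stmt14 {A : Type} (k : ℕ) (hk : 3 ≤ k) (G : Subgroup (Equiv.Perm A))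
    (hG : Neoliberal G k)
    {σ' : Sig} (Astr : StructOn σ' A)
    (hexp : IsFOExpansion (canonStruct G k) Astr)
    (C : Set (Fin k → A)) (hC : C.Nonempty)
    (φ : ImplData A k k) (himpl : φ.IsImplication Astr C C)
    (hE : proj φ.u φ.Φ = proj φ.v φ.Φ) :
    (∃ S1 : Set (Set (Fin k → A)), (∀ O ∈ S1, O ⊆ C) ∧
      IsSCC (canonStruct G k) φ (proj φ.u φ.Φ) S1 ∧
      IsSink (canonStruct G k) φ (proj φ.u φ.Φ) S1) ∧
    (∃ S2 : Set (Set (Fin k → A)), (∀ O ∈ S2, O ⊆ proj φ.u φ.Φ \ C) ∧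
      IsSCC (canonStruct G k) φ (proj φ.u φ.Φ) S2 ∧
      IsSource (canonStruct G k) φ (proj φ.u φ.Φ) S2) ∧
    ∀ O ∈ VertOf (canonStruct G k) (proj φ.u φ.Φ),
      (∃ P, ArcOn (canonStruct G k) φ (proj φ.u φ.Φ) O P) ∧
      (∃ P, ArcOn (canonStruct G k) φ (proj φ.u φ.Φ) P O) := by
  classical
  obtain ⟨pre, -⟩ := himpl
  set Bst := canonStruct G k with hBst
  set E := proj φ.u φ.Φ with hEdef
  set Arc := ArcOn Bst φ E with hArc
  have hCE : C ⊆ E := pre.C_proper.subset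
  -- invariance of Φ, C, E under automorphisms of Bst
  have hΦinv : ∀ g : A → A, IsAuto Bst g → ∀ f ∈ φ.Φ, g ∘ f ∈ φ.Φ :=
    fun g hg f hf => ppDef_comp_auto hexp.2 pre.Φ_pp hg hf
  have hCinv : ∀ g : A → A, IsAuto Bst g → ∀ t ∈ C, g ∘ t ∈ C :=
    fun g hg t ht => ppDef_comp_auto hexp.2 pre.C_pp hg ht
  have hEinv : ∀ g : A → A, IsAuto Bst g → ∀ t ∈ E, g ∘ t ∈ E := by
    rintro g hg t ⟨f, hf, rfl⟩
    exact ⟨g ∘ f, hΦinv g hg f hf, rfl⟩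
  have orbC : ∀ t ∈ C, autOrbit Bst t ⊆ C := by
    rintro t ht s ⟨g, hg, rfl⟩
    exact hCinv g hg t ht
  have orbE : ∀ t ∈ E, autOrbit Bst t ⊆ E := by
    rintro t ht s ⟨g, hg, rfl⟩
    exact hEinv g hg t ht
  have orbCompl : ∀ O : Set (Fin k → A), IsAutOrbit Bst O → (O ∩ C).Nonempty → O ⊆ C := by
    rintro O ⟨t, rfl⟩ ⟨x, hxO, hxC⟩
    rw [← autOrbit_eq_of_mem' hxO]
    exact orbC x hxC
  have hVfin : (VertOf Bst E).Finite := by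
    refine (hG.1 k).subset ?_
    rintro O ⟨⟨t, rfl⟩, -⟩
    exact ⟨t, autOrbit_canon G t⟩
  have vert_mk : ∀ t ∈ E, autOrbit Bst t ∈ VertOf Bst E :=
    fun t ht => ⟨⟨t, rfl⟩, orbE t ht⟩
  -- smoothness
  have smooth_out : ∀ O ∈ VertOf Bst E, ∃ P, Arc O P := by
    rintro O hO
    obtain ⟨t0, rfl⟩ := hO.1
    have ht0 : t0 ∈ autOrbit Bst t0 := mem_autOrbit_self' Bst t0
    obtain ⟨f, hf, hfu⟩ := hO.2 ht0
    have hfv : f ∘ φ.v ∈ E := by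
      rw [hE]
      exact ⟨f, hf, rfl⟩
    exact ⟨autOrbit Bst (f ∘ φ.v), hO, vert_mk _ hfv, f, hf, hfu ▸ ht0,
      mem_autOrbit_self' Bst _⟩
  have smooth_in : ∀ O ∈ VertOf Bst E, ∃ P, Arc P O := by
    rintro O hO
    obtain ⟨t0, rfl⟩ := hO.1
    have ht0 : t0 ∈ autOrbit Bst t0 := mem_autOrbit_self' Bst t0
    have ht0E : t0 ∈ proj φ.v φ.Φ := by rw [← hE]; exact hO.2 ht0
    obtain ⟨f, hf, hfv⟩ := ht0E
    have hfu : f ∘ φ.u ∈ E := ⟨f, hf, rfl⟩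
    exact ⟨autOrbit Bst (f ∘ φ.u), vert_mk _ hfu, hO, f, hf,
      mem_autOrbit_self' Bst _, hfv ▸ ht0⟩
  have closed_out : ∀ O P : Set (Fin k → A), O ⊆ C → Arc O P → P ⊆ C := by
    rintro O P hOC ⟨-, hPV, f, hfΦ, hfu, hfv⟩
    exact orbCompl P hPV.1 ⟨f ∘ φ.v, hfv, pre.forward f hfΦ (hOC hfu)⟩
  have closed_in : ∀ O P : Set (Fin k → A), P ⊆ E \ C → Arc O P → O ⊆ E \ C := by
    rintro O P hPC ⟨hOV, -, f, hfΦ, hfu, hfv⟩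
    intro x hx
    refine ⟨hOV.2 hx, fun hxC => ?_⟩
    have hOC : O ⊆ C := orbCompl O hOV.1 ⟨x, hx, hxC⟩
    exact (hPC hfv).2 (pre.forward f hfΦ (hOC hfu))
  -- the sink SCC
  have part1 : ∃ S1 : Set (Set (Fin k → A)), (∀ O ∈ S1, O ⊆ C) ∧
      IsSCC Bst φ E S1 ∧ IsSink Bst φ E S1 := by
    set W1 : Set (Set (Fin k → A)) := {O | O ∈ VertOf Bst E ∧ O ⊆ C} with hW1
    have hW1fin : W1.Finite := hVfin.subset fun O h => h.1
    obtain ⟨a, ha⟩ := hC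
    have hW1ne : W1.Nonempty := ⟨autOrbit Bst a, vert_mk a (hCE ha), orbC a ha⟩
    have closed1 : ∀ O ∈ W1, ∀ P, Arc O P → P ∈ W1 :=
      fun O hO P hAP => ⟨hAP.2.1, closed_out O P hO.2 hAP⟩
    obtain ⟨Q1, hQ1W, hQ1cyc, hQ1back⟩ :=
      exists_good_base hW1fin hW1ne closed1 (fun O hO => smooth_out O hO.1)
    set S1 : Set (Set (Fin k → A)) :=
      {R | Relation.TransGen Arc Q1 R ∧ Relation.TransGen Arc R Q1} with hS1
    have reach1 : ∀ P, Relation.TransGen Arc Q1 P → P ∈ W1 := by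
      intro P h
      induction h with
      | single h => exact closed1 _ hQ1W _ h
      | tail _ h ih => exact closed1 _ ih _ h
    have hS1W : S1 ⊆ W1 := fun R hR => reach1 R hR.1
    have hQ1S1 : Q1 ∈ S1 := ⟨hQ1cyc, hQ1cyc⟩
    refine ⟨S1, fun O hO => (hS1W hO).2, ⟨fun O hO => (hS1W hO).1,
      fun O hO P hP => hO.2.trans hP.1, ?_⟩, ?_⟩
    · intro S' hsub hsubV hpairs
      ext R
      exact ⟨fun hR => ⟨hpairs _ (hsub hQ1S1) _ hR, hpairs _ hR _ (hsub hQ1S1)⟩,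
        fun hR => hsub hR⟩
    · intro O hO P hAP
      have h1 : Relation.TransGen Arc Q1 P := hO.1.tail hAP
      exact ⟨h1, hQ1back P h1⟩
  -- the source SCC
  have part2 : ∃ S2 : Set (Set (Fin k → A)), (∀ O ∈ S2, O ⊆ E \ C) ∧
      IsSCC Bst φ E S2 ∧ IsSource Bst φ E S2 := by
    set W2 : Set (Set (Fin k → A)) := {O | O ∈ VertOf Bst E ∧ O ⊆ E \ C} with hW2
    have hW2fin : W2.Finite := hVfin.subset fun O h => h.1
    obtain ⟨t, htE, htC⟩ := Set.exists_of_ssubset pre.C_proper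
    have hW2ne : W2.Nonempty := by
      refine ⟨autOrbit Bst t, vert_mk t htE, fun x hx => ⟨orbE t htE hx, fun hxC => ?_⟩⟩
      exact htC (orbCompl _ ⟨t, rfl⟩ ⟨x, hx, hxC⟩ (mem_autOrbit_self' Bst t))
    have closed2 : ∀ O ∈ W2, ∀ P, Function.swap Arc O P → P ∈ W2 :=
      fun O hO P hAP => ⟨hAP.1, closed_in P O hO.2 hAP⟩
    obtain ⟨Q2, hQ2W, hQ2cyc, hQ2back⟩ :=
      exists_good_base hW2fin hW2ne closed2 (fun O hO => smooth_in O hO.1)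
    set S2 : Set (Set (Fin k → A)) :=
      {R | Relation.TransGen Arc R Q2 ∧ Relation.TransGen Arc Q2 R} with hS2
    have reach2 : ∀ P, Relation.TransGen (Function.swap Arc) Q2 P → P ∈ W2 := by
      intro P h
      induction h with
      | single h => exact closed2 _ hQ2W _ h
      | tail _ h ih => exact closed2 _ ih _ h
    have hS2W : S2 ⊆ W2 := fun R hR => reach2 R (Relation.transGen_swap.mpr hR.1)
    have hQ2S2 : Q2 ∈ S2 :=
      ⟨Relation.transGen_swap.mp hQ2cyc, Relation.transGen_swap.mp hQ2cyc⟩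
    refine ⟨S2, fun O hO => (hS2W hO).2, ⟨fun O hO => (hS2W hO).1,
      fun O hO P hP => hO.1.trans hP.2, ?_⟩, ?_⟩
    · intro S' hsub hsubV hpairs
      ext R
      exact ⟨fun hR => ⟨hpairs _ hR _ (hsub hQ2S2), hpairs _ (hsub hQ2S2) _ hR⟩,
        fun hR => hsub hR⟩
    · intro P hP O hAP
      have h1 : Relation.TransGen (Function.swap Arc) Q2 O :=
        (Relation.transGen_swap.mpr hP.1).tail hAP
      exact ⟨Relation.transGen_swap.mp h1,
        Relation.transGen_swap.mp (hQ2back O h1)⟩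
  exact ⟨part1, part2, fun O hO => ⟨smooth_out O hO, smooth_in O hO⟩⟩
end

section
/- Let k ≥ 2 and let B be a k-neoliberal relational structure. Then: for every ℓ < k, every ℓ-ary relation first-order definable from B is a Boolean combination of equalities and non-equalities between coordinates; every k-ary relation first-order definable from B is a union of relations of B; and every relation of arity ℓ > k first-order definable from B is a Boolean combination of the (k-ary) relations of B applied to k-subtuples. -/
open Function Set

section Stmt19Aux
open CSPPaper FirstOrder FirstOrder.Language

variable {A : Type} {G : Subgroup (Equiv.Perm A)}

theorem Stmt19.mem_orbit_self {n : ℕ} (t : Fin n → A) : t ∈ orbitOf G t :=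
  ⟨1, G.one_mem, by ext i; simp⟩

theorem Stmt19.comp_mem_orbit {n : ℕ} {t s : Fin n → A} (h : s ∈ orbitOf G t)
    {g : Equiv.Perm A} (hg : g ∈ G) : ⇑g ∘ s ∈ orbitOf G t := by
  obtain ⟨h', hh', rfl⟩ := h
  exact ⟨g * h', G.mul_mem hg hh', by ext i; simp⟩

theorem Stmt19.comp_mem_orbit_iff {n : ℕ} {t s : Fin n → A}
    {g : Equiv.Perm A} (hg : g ∈ G) : ⇑g ∘ s ∈ orbitOf G t ↔ s ∈ orbitOf G t := by
  constructor
  · intro h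
    have := Stmt19.comp_mem_orbit h (G.inv_mem hg)
    have he : ⇑g⁻¹ ∘ (⇑g ∘ s) = s := by ext i; simp
    rwa [he] at this
  · exact fun h => Stmt19.comp_mem_orbit h hg

theorem Stmt19.orbit_eq_of_mem {n : ℕ} {t s : Fin n → A} (h : s ∈ orbitOf G t) :
    orbitOf G s = orbitOf G t := by
  obtain ⟨g, hg, rfl⟩ := h
  ext x
  constructor
  · rintro ⟨h', hh', rfl⟩
    exact ⟨h' * g, G.mul_mem hh' hg, by ext i; simp⟩
  · rintro ⟨h', hh', rfl⟩
    refine ⟨h' * g⁻¹, G.mul_mem hh' (G.inv_mem hg), by ext i; simp⟩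

/-- first-order definable relations are invariant under `G`. -/
theorem Stmt19.fo_inv {k : ℕ} {α : Type} {R : Set (α → A)}
    (hR : foDefinable (canonStruct G k) R) {g : Equiv.Perm A} (hg : g ∈ G)
    {t : α → A} (ht : t ∈ R) : ⇑g ∘ t ∈ R := by
  letI := structureOf (canonStruct G k)
  obtain ⟨φ, rfl⟩ := Set.empty_definable_iff.1 hR
  let e : A ≃[sigLang (canonSig G k)] A :=
    { toEquiv := (g : Equiv.Perm A)
      map_fun' := fun f _ => f.elim
      map_rel' := by
        intro n r x
        obtain ⟨⟨O, hO⟩, hr⟩ := r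
        obtain ⟨t0, rfl⟩ := hO
        exact Stmt19.comp_mem_orbit_iff hg }
  exact (StrongHomClass.realize_formula e φ (v := t)).2 ht

theorem Stmt19.boolComb_empty {β : Type} (basic : Set (Set β)) :
    BoolComb basic (∅ : Set β) := by
  have := BoolComb.compl (basic := basic) Set.univ BoolComb.univ
  simpa using this

theorem Stmt19.boolComb_union {β : Type} {basic : Set (Set β)} {s t : Set β}
    (hs : BoolComb basic s) (ht : BoolComb basic t) : BoolComb basic (s ∪ t) := by
  have h := BoolComb.compl _ (BoolComb.inter _ _ (BoolComb.compl _ hs) (BoolComb.compl _ ht))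
  simpa [Set.compl_inter] using h

theorem Stmt19.boolComb_sUnion {β : Type} {basic : Set (Set β)} {𝒪 : Set (Set β)}
    (h𝒪 : 𝒪.Finite) (h : ∀ O ∈ 𝒪, BoolComb basic O) : BoolComb basic (⋃₀ 𝒪) := by
  refine Set.Finite.induction_on
    (motive := fun s _ => (∀ O ∈ s, BoolComb basic O) → BoolComb basic (⋃₀ s)) _ h𝒪 ?_ ?_ h
  · intro _; simpa using Stmt19.boolComb_empty basic
  · intro a s _ _ ih h
    rw [Set.sUnion_insert]
    exact Stmt19.boolComb_union (h _ (Set.mem_insert _ _))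
      (ih fun O hO => h O (Set.mem_insert_of_mem _ hO))

theorem Stmt19.boolComb_biInter {β ι : Type} {basic : Set (Set β)}
    (s : Finset ι) (f : ι → Set β) (h : ∀ i ∈ s, BoolComb basic (f i)) :
    BoolComb basic (⋂ i ∈ s, f i) := by
  classical
  induction s using Finset.induction_on with
  | empty => simpa using BoolComb.univ (basic := basic)
  | insert _ _ ha ih =>
    rw [Finset.set_biInter_insert]
    exact BoolComb.inter _ _ (h _ (Finset.mem_insert_self _ _))
      (ih fun i hi => h i (Finset.mem_insert_of_mem hi))

/-- No `k`-algebraicity forces any `≤ k`-element finite subset to miss an element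
(when the domain has at least two elements). -/
theorem Stmt19.exists_not_mem {k : ℕ} (hk : 2 ≤ k) (hNA : NoKAlgebraicity G k)
    (hA : ∃ x y : A, x ≠ y) (F : Finset A) (hF : F.card ≤ k) : ∃ b, b ∉ F := by
  classical
  by_contra hcon
  push_neg at hcon
  obtain ⟨x, y, hxy⟩ := hA
  set F' : Finset A := F.erase x with hF'
  have hyF' : y ∈ F' := Finset.mem_erase.2 ⟨fun h => hxy h.symm, hcon y⟩
  have hne : F'.Nonempty := ⟨y, hyF'⟩
  have hcard : F'.card ≤ k - 1 := by
    have h1 : F'.card = F.card - 1 := Finset.card_erase_of_mem (hcon x)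
    have h2 : 1 ≤ F.card := Finset.card_pos.2 ⟨y, hcon y⟩
    omega
  obtain ⟨c, hc⟩ := hne
  let e := F'.equivFin
  let a : Fin (k - 1) → A := fun j =>
    if hj : (j : ℕ) < F'.card then (e.symm ⟨j, hj⟩ : A) else c
  have haF' : ∀ j, a j ∈ F' := by
    intro j
    by_cases hj : (j : ℕ) < F'.card
    · simp only [a, dif_pos hj]; exact (e.symm ⟨j, hj⟩).2
    · simp only [a, dif_neg hj]; exact hc
  have hsurj : ∀ z ∈ F', ∃ j, a j = z := by
    intro z hz
    have hlt : ((e ⟨z, hz⟩ : Fin F'.card) : ℕ) < F'.card := (e ⟨z, hz⟩).2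
    refine ⟨⟨(e ⟨z, hz⟩ : Fin F'.card), lt_of_lt_of_le hlt hcard⟩, ?_⟩
    have h3 : (⟨(e ⟨z, hz⟩ : Fin F'.card), hlt⟩ : Fin F'.card) = e ⟨z, hz⟩ :=
      Fin.ext rfl
    simp only [a, dif_pos hlt, h3]
    rw [Equiv.symm_apply_apply]
  have hfix : ∀ g ∈ G, (∀ i, g (a i) = a i) → g x = x := by
    intro g hg hga
    have hfixF' : ∀ z ∈ F', g z = z := by
      intro z hz
      obtain ⟨j, rfl⟩ := hsurj z hz
      exact hga j
    by_contra hgx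
    have hgxF' : g x ∈ F' := Finset.mem_erase.2 ⟨hgx, hcon _⟩
    have := hfixF' _ hgxF'
    exact hgx (g.injective this)
  obtain ⟨i, hi⟩ := hNA a x hfix
  have : x ∈ F' := hi ▸ haF' i
  exact (Finset.mem_erase.1 this).1 rfl

/-- Any injective `d`-tuple with `d + m = k - 1` extends to an injective `(k-1)`-tuple. -/
theorem Stmt19.extend_inj {k : ℕ} (hk : 2 ≤ k) (hNA : NoKAlgebraicity G k)
    (hA : ∃ x y : A, x ≠ y) :
    ∀ (m d : ℕ) (hdm : d + m = k - 1) (v : Fin d → A), Function.Injective v →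
      ∃ v' : Fin (k - 1) → A, Function.Injective v' ∧
        ∀ i : Fin d, v' (Fin.castLE (by omega) i) = v i := by
  classical
  intro m
  induction m with
  | zero =>
    intro d hdm v hv
    refine ⟨fun j => v (Fin.cast (by omega) j), ?_, fun i => ?_⟩
    · intro a b hab
      exact Fin.ext (by simpa using congrArg Fin.val (hv hab))
    · exact congrArg v (Fin.ext rfl)
  | succ m ih =>
    intro d hdm v hv
    obtain ⟨b, hb⟩ := Stmt19.exists_not_mem hk hNA hA (Finset.univ.image v)
      (le_trans (Finset.card_image_le) (by simp; omega))
    have hw : Function.Injective (Fin.snoc v b : Fin (d + 1) → A) := by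
      intro a1 a2 hEq
      rcases Fin.eq_castSucc_or_eq_last a1 with ⟨i1, rfl⟩ | rfl <;>
        rcases Fin.eq_castSucc_or_eq_last a2 with ⟨i2, rfl⟩ | rfl
      · rw [Fin.snoc_castSucc, Fin.snoc_castSucc] at hEq
        exact congrArg Fin.castSucc (hv hEq)
      · rw [Fin.snoc_castSucc, Fin.snoc_last] at hEq
        exact absurd (hEq ▸ Finset.mem_image_of_mem v (Finset.mem_univ i1)) hb
      · rw [Fin.snoc_castSucc, Fin.snoc_last] at hEq
        exact absurd (hEq ▸ Finset.mem_image_of_mem v (Finset.mem_univ i2)) hb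
      · rfl
    obtain ⟨v', hv', hvv⟩ := ih (d + 1) (by omega) _ hw
    refine ⟨v', hv', fun i => ?_⟩
    have h1 := hvv (Fin.castSucc i)
    rw [Fin.snoc_castSucc] at h1
    rw [← h1]
    exact congrArg v' (Fin.ext rfl)

/-- Every tuple factors as `s = (s ∘ w) ∘ p` with `s ∘ w` injective. -/
theorem Stmt19.factor {ℓ : ℕ} (s : Fin ℓ → A) :
    ∃ (d : ℕ) (_ : d ≤ ℓ) (p : Fin ℓ → Fin d) (w : Fin d → Fin ℓ),
      (∀ i, s (w (p i)) = s i) ∧ Function.Injective (s ∘ w) := by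
  classical
  have hmin : ∀ {F F' : Finset (Fin ℓ)} (hF : F.Nonempty) (hF' : F'.Nonempty),
      F = F' → F.min' hF = F'.min' hF' := by
    rintro F F' hF hF' rfl; rfl
  let occ : Fin ℓ → Finset (Fin ℓ) := fun i => Finset.univ.filter (fun j => s j = s i)
  have hmem : ∀ i, i ∈ occ i := fun i => Finset.mem_filter.2 ⟨Finset.mem_univ _, rfl⟩
  let mo : Fin ℓ → Fin ℓ := fun i => (occ i).min' ⟨i, hmem i⟩
  have hmo_val : ∀ i, s (mo i) = s i := fun i =>
    (Finset.mem_filter.1 ((occ i).min'_mem ⟨i, hmem i⟩)).2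
  have hocc_eq : ∀ i j, s i = s j → occ i = occ j := by
    intro i j h
    ext a
    simp only [occ, Finset.mem_filter, h]
  have hmo_eq : ∀ i j, s i = s j → mo i = mo j := fun i j h =>
    hmin ⟨i, hmem i⟩ ⟨j, hmem j⟩ (hocc_eq i j h)
  let Occ : Finset (Fin ℓ) := Finset.univ.image mo
  let e := Occ.orderIsoOfFin rfl
  refine ⟨Occ.card, le_trans (Finset.card_le_univ _) (by simp), 
    fun i => e.symm ⟨mo i, Finset.mem_image_of_mem mo (Finset.mem_univ i)⟩,
    fun r => (e r : Fin ℓ), fun i => ?_, ?_⟩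
  · simp only [OrderIso.apply_symm_apply]
    exact hmo_val i
  · intro r1 r2 hr
    have h1 : ((e r1 : Fin ℓ)) ∈ Occ := (e r1).2
    have h2 : ((e r2 : Fin ℓ)) ∈ Occ := (e r2).2
    obtain ⟨i1, _, hi1⟩ := Finset.mem_image.1 h1
    obtain ⟨i2, _, hi2⟩ := Finset.mem_image.1 h2
    have hs12 : s i1 = s i2 := by
      have e1 : s (mo i1) = s i1 := hmo_val i1
      have e2 : s (mo i2) = s i2 := hmo_val i2
      rw [← e1, ← e2, hi1, hi2]
      exact hr
    have : (e r1 : Fin ℓ) = (e r2 : Fin ℓ) := by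
      rw [← hi1, ← hi2]; exact hmo_eq i1 i2 hs12
    have := Subtype.ext this
    have := congrArg e.symm this
    rwa [OrderIso.symm_apply_apply, OrderIso.symm_apply_apply] at this

/-- Two tuples of arity `< k` with the same equality pattern lie in the same orbit. -/
theorem Stmt19.same_pattern_orbit {k ℓ : ℕ} (hk : 2 ≤ k) (htr : MTransitive G (k - 1))
    (hNA : NoKAlgebraicity G k) (hA : ∃ x y : A, x ≠ y) (hl : ℓ < k)
    {s t : Fin ℓ → A} (hpat : ∀ i j, s i = s j ↔ t i = t j) :
    ∃ g ∈ G, ⇑g ∘ s = t := by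
  obtain ⟨d, hd, p, w, hpw, hinj⟩ := Stmt19.factor s
  have hdk : d ≤ k - 1 := by omega
  have hvt : ∀ i, t (w (p i)) = t i := fun i => (hpat _ _).1 (hpw i)
  have hinjt : Function.Injective (t ∘ w) := by
    intro r1 r2 h
    exact hinj ((hpat (w r1) (w r2)).2 h)
  obtain ⟨vs, hvs, hvse⟩ := Stmt19.extend_inj hk hNA hA (k - 1 - d) d (by omega) (s ∘ w) hinj
  obtain ⟨vt, hvtinj, hvte⟩ := Stmt19.extend_inj hk hNA hA (k - 1 - d) d (by omega) (t ∘ w) hinjt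
  obtain ⟨g, hgG, hg⟩ := htr vs vt hvs hvtinj
  refine ⟨g, hgG, funext fun i => ?_⟩
  calc g (s i) = g (s (w (p i))) := by rw [hpw]
    _ = g ((s ∘ w) (p i)) := rfl
    _ = g (vs (Fin.castLE (by omega) (p i))) := by rw [hvse]
    _ = vt (Fin.castLE (by omega) (p i)) := congrFun hg _
    _ = (t ∘ w) (p i) := hvte _
    _ = t (w (p i)) := rfl
    _ = t i := hvt i

theorem Stmt19.orbit_pattern_boolComb {k ℓ : ℕ} (hk : 2 ≤ k) (htr : MTransitive G (k - 1))
    (hNA : NoKAlgebraicity G k) (hA : ∃ x y : A, x ≠ y) (hl : ℓ < k) (t : Fin ℓ → A) :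
    BoolComb {s : Set (Fin ℓ → A) | ∃ i j : Fin ℓ, s = {u | u i = u j}} (orbitOf G t) := by
  classical
  have key : orbitOf G t = ⋂ q ∈ (Finset.univ : Finset (Fin ℓ × Fin ℓ)),
      (if t q.1 = t q.2 then {u : Fin ℓ → A | u q.1 = u q.2}
        else {u : Fin ℓ → A | u q.1 = u q.2}ᶜ) := by
    ext x
    simp only [Set.mem_iInter, Finset.mem_univ, forall_const]
    constructor
    · rintro ⟨g, hg, rfl⟩ q
      by_cases h : t q.1 = t q.2
      · rw [if_pos h]; exact congrArg g h
      · rw [if_neg h]; intro hc; exact h (g.injective hc)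
    · intro hx
      have hpat : ∀ i j, t i = t j ↔ x i = x j := by
        intro i j
        have hq := hx (i, j)
        by_cases h : t i = t j
        · rw [if_pos h] at hq; exact ⟨fun _ => hq, fun _ => h⟩
        · rw [if_neg h] at hq; exact ⟨fun hh => absurd hh h, fun hh => absurd hh hq⟩
      obtain ⟨g, hg, hgp⟩ := Stmt19.same_pattern_orbit hk htr hNA hA hl hpat
      exact ⟨g, hg, hgp.symm⟩
  rw [key]
  apply Stmt19.boolComb_biInter
  intro q _
  by_cases h : t q.1 = t q.2
  · rw [if_pos h]; exact BoolComb.of _ ⟨q.1, q.2, rfl⟩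
  · rw [if_neg h]; exact BoolComb.compl _ (BoolComb.of _ ⟨q.1, q.2, rfl⟩)

theorem Stmt19.orbit_sub_boolComb {k ℓ : ℕ} (hhom : KHomogeneous G k) (hl : k ≤ ℓ)
    (t : Fin ℓ → A) :
    BoolComb {s : Set (Fin ℓ → A) | ∃ (i : (canonSig G k).ι) (p : Fin k → Fin ℓ),
        s = {u | (fun j => u (p j)) ∈ (canonStruct G k).rel i}} (orbitOf G t) := by
  classical
  have key : orbitOf G t = ⋂ p ∈ (Finset.univ : Finset (Fin k → Fin ℓ)),
      {u : Fin ℓ → A | (fun j => u (p j)) ∈ orbitOf G (t ∘ p)} := by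
    ext x
    simp only [Set.mem_iInter, Finset.mem_univ, forall_const, Set.mem_setOf_eq]
    constructor
    · rintro ⟨g, hg, rfl⟩ p
      exact ⟨g, hg, rfl⟩
    · intro hx
      have horb : ∀ p : Fin k → Fin ℓ, orbitOf G (x ∘ p) = orbitOf G (t ∘ p) :=
        fun p => Stmt19.orbit_eq_of_mem (hx p)
      have h2 := hhom ℓ hl x t horb
      rw [← h2]
      exact Stmt19.mem_orbit_self x
  rw [key]
  apply Stmt19.boolComb_biInter
  intro p _
  exact BoolComb.of _ ⟨⟨orbitOf G (t ∘ p), ⟨t ∘ p, rfl⟩⟩, p, rfl⟩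

end Stmt19Aux

open CSPPaper in
/-- description of the first-order definable relations of a `k`-neoliberal
structure: below arity `k` they are Boolean combinations of equalities, at arity `k`
unions of relations of `B`, and above arity `k` Boolean combinations of relations of `B`
applied to `k`-subtuples. -/
theorem stmt19 {A : Type} (k : ℕ) (hk : 2 ≤ k) (G : Subgroup (Equiv.Perm A))
    (hG : Neoliberal G k) :
    (∀ ℓ : ℕ, ℓ < k → ∀ R : Set (Fin ℓ → A), foDefinable (canonStruct G k) R →
      BoolComb {s : Set (Fin ℓ → A) | ∃ i j : Fin ℓ, s = {t | t i = t j}} R) ∧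
    (∀ R : Set (Fin k → A), foDefinable (canonStruct G k) R →
      ∃ 𝒪 : Set (Set (Fin k → A)),
        (∀ O ∈ 𝒪, ∃ i : (canonSig G k).ι, O = (canonStruct G k).rel i) ∧ R = ⋃₀ 𝒪) ∧
    (∀ ℓ : ℕ, k < ℓ → ∀ R : Set (Fin ℓ → A), foDefinable (canonStruct G k) R →
      BoolComb {s : Set (Fin ℓ → A) | ∃ (i : (canonSig G k).ι) (p : Fin k → Fin ℓ),
        s = {t | (fun j => t (p j)) ∈ (canonStruct G k).rel i}} R) := by
  classical
  obtain ⟨holig, htr, hhom, hNA⟩ := hG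
  have hinv : ∀ {n : ℕ} {R : Set (Fin n → A)}, foDefinable (canonStruct G k) R →
      ∀ t ∈ R, orbitOf G t ⊆ R := by
    intro n R hR t ht x hx
    obtain ⟨g, hg, rfl⟩ := hx
    exact Stmt19.fo_inv hR hg ht
  have hdecomp : ∀ {n : ℕ} {R : Set (Fin n → A)}, foDefinable (canonStruct G k) R →
      R = ⋃₀ {O | ∃ t ∈ R, O = orbitOf G t} := by
    intro n R hR
    ext x
    constructor
    · intro hx
      exact ⟨orbitOf G x, ⟨x, hx, rfl⟩, Stmt19.mem_orbit_self x⟩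
    · rintro ⟨O, ⟨t, ht, rfl⟩, hx⟩
      exact hinv hR t ht hx
  have hfin : ∀ {n : ℕ} (R : Set (Fin n → A)), {O | ∃ t ∈ R, O = orbitOf G t}.Finite := by
    intro n R
    exact (holig n).subset (by rintro O ⟨t, -, rfl⟩; exact ⟨t, rfl⟩)
  refine ⟨?_, ?_, ?_⟩
  · intro ℓ hl R hR
    by_cases hA : ∃ x y : A, x ≠ y
    · rw [hdecomp hR]
      refine Stmt19.boolComb_sUnion (hfin R) ?_
      rintro O ⟨t, ht, rfl⟩
      exact Stmt19.orbit_pattern_boolComb hk htr hNA hA hl t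
    · push_neg at hA
      rcases Set.eq_empty_or_nonempty R with h | h
      · rw [h]; exact Stmt19.boolComb_empty _
      · obtain ⟨t, ht⟩ := h
        have hu : R = Set.univ := by
          ext x
          simp only [Set.mem_univ, iff_true]
          have hx : x = t := funext fun i => hA _ _
          rwa [hx]
        rw [hu]; exact BoolComb.univ
  · intro R hR
    refine ⟨{O | ∃ t ∈ R, O = orbitOf G t}, ?_, hdecomp hR⟩
    rintro O ⟨t, ht, rfl⟩
    exact ⟨⟨orbitOf G t, ⟨t, rfl⟩⟩, rfl⟩
  · intro ℓ hl R hR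
    rw [hdecomp hR]
    refine Stmt19.boolComb_sUnion (hfin R) ?_
    rintro O ⟨t, ht, rfl⟩
    exact Stmt19.orbit_sub_boolComb hhom (le_of_lt hl) t
end
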